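/- arXiv:1711.00082 — 4 statements merged into one kernel-verified Lean document; each statement's English description precedes it below -/
import Mathlib

section
/- Let Z ∈ M_n(ℂ) be a complex symmetric matrix (Zᵗ = Z) such that I_n − ZZ* is positive definite. Then there exist A ∈ U(n) and a diagonal matrix D ∈ M_n(ℝ) with all diagonal entries in [0,1) such that Z = A·D·Aᵗ. -/
open scoped Matrix ComplexOrder

open Matrix in
lemma star_mulVec_eq (m : ℕ) (M : Matrix (Fin m) (Fin m) ℂ) (x : Fin m → ℂ) :
    star (M *ᵥ x) = M.map star *ᵥ star x := by
  ext i
  simp [Matrix.mulVec, dotProduct, star_sum, Matrix.map_apply]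

open Matrix in
lemma singular_pair (m : ℕ) (hm : 0 < m) (Z : Matrix (Fin m) (Fin m) ℂ) (hsym : Zᵀ = Z) :
    ∃ (σ : ℝ) (v : EuclideanSpace ℂ (Fin m)), 0 ≤ σ ∧ ‖v‖ = 1 ∧
      Z *ᵥ (star ((WithLp.equiv 2 (Fin m → ℂ)) v)) = (σ : ℂ) • ((WithLp.equiv 2 (Fin m → ℂ)) v) := by
  have hzij : ∀ i j, Z i j = Z j i := fun i j =>
    ((congrFun (congrFun hsym i) j).symm : Z i j = Z j i)
  have hmap : Z.map star = Zᴴ := by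
    ext i j
    simp [Matrix.conjTranspose_apply, Matrix.map_apply, hzij i j]
  have hPSD : (Z * Zᴴ).PosSemidef := Matrix.posSemidef_self_mul_conjTranspose Z
  have hH : (Z * Zᴴ).IsHermitian := hPSD.1
  set i0 : Fin m := ⟨0, hm⟩
  set u : EuclideanSpace ℂ (Fin m) := hH.eigenvectorBasis i0 with hu
  set uf : Fin m → ℂ := (WithLp.equiv 2 (Fin m → ℂ)) u with huf
  set μ : ℝ := hH.eigenvalues i0 with hμdef
  have hμ : 0 ≤ μ := hPSD.eigenvalues_nonneg i0
  set σ : ℝ := Real.sqrt μ with hσdef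
  have hσ : 0 ≤ σ := Real.sqrt_nonneg μ
  have hσσ : (σ : ℂ) * (σ : ℂ) = (μ : ℂ) := by
    rw [← Complex.ofReal_mul, Real.mul_self_sqrt hμ]
  have hunorm : ‖u‖ = 1 := hH.eigenvectorBasis.orthonormal.1 i0
  have key : Z *ᵥ star (Z *ᵥ star uf) = (μ : ℂ) • uf := by
    rw [star_mulVec_eq, star_star, hmap, Matrix.mulVec_mulVec]
    rw [hu, huf] at *
    rw [WithLp.equiv_apply, hH.mulVec_eigenvectorBasis i0]
    ext j
    simp [Complex.real_smul, hμdef]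
  set w : Fin m → ℂ := Z *ᵥ star uf + (σ : ℂ) • uf with hw
  have hZw : Z *ᵥ star w = (σ : ℂ) • w := by
    have : star w = star (Z *ᵥ star uf) + (σ : ℂ) • star uf := by
      rw [hw]; ext j; simp [star_add, Complex.conj_ofReal]
    rw [this, Matrix.mulVec_add, key, Matrix.mulVec_smul, hw]
    rw [smul_add, smul_smul, hσσ]
    abel
  by_cases hw0 : w = 0
  · have hneg : Z *ᵥ star uf = -((σ : ℂ) • uf) := by
      have h0 : Z *ᵥ star uf + (σ : ℂ) • uf = 0 := by rw [← hw]; exact hw0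
      linear_combination (norm := abel) h0
    refine ⟨σ, Complex.I • u, hσ, ?_, ?_⟩
    · rw [norm_smul, hunorm, Complex.norm_I, one_mul]
    · have hvf : (WithLp.equiv 2 (Fin m → ℂ)) (Complex.I • u) = Complex.I • uf := by
        rw [huf]; exact rfl
      rw [hvf]
      have hstar : star (Complex.I • uf) = (-Complex.I) • star uf := by
        ext j
        simp only [Pi.smul_apply, Pi.star_apply, Pi.neg_apply, RCLike.star_def, _root_.map_mul,
          Complex.conj_I, smul_eq_mul, neg_mul]
      rw [hstar, Matrix.mulVec_smul, hneg]
      ext j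
      simp only [Pi.smul_apply, Pi.neg_apply, smul_eq_mul]
      ring
  · set wE : EuclideanSpace ℂ (Fin m) := (WithLp.equiv 2 (Fin m → ℂ)).symm w with hwE
    have hwE0 : wE ≠ 0 := by
      intro h
      apply hw0
      have := congrArg (WithLp.equiv 2 (Fin m → ℂ)) h
      simpa [hwE] using this
    refine ⟨σ, ‖wE‖⁻¹ • wE, hσ, norm_smul_inv_norm hwE0, ?_⟩
    have hvf : (WithLp.equiv 2 (Fin m → ℂ)) (‖wE‖⁻¹ • wE) = ((‖wE‖⁻¹ : ℝ) : ℂ) • w := by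
      ext j
      simp [hwE, Complex.real_smul]
    rw [hvf]
    have hstar : star (((‖wE‖⁻¹ : ℝ) : ℂ) • w) = ((‖wE‖⁻¹ : ℝ) : ℂ) • star w := by
      ext j; simp [Pi.smul_apply, Complex.conj_ofReal]
    rw [hstar, Matrix.mulVec_smul, hZw, smul_comm]

section
variable {m : ℕ}

open Matrix in
lemma onb_unitary (b : OrthonormalBasis (Fin m) ℂ (EuclideanSpace ℂ (Fin m))) :
    (Matrix.of fun i j => (WithLp.equiv 2 (Fin m → ℂ)) (b j) i)ᴴ *
      (Matrix.of fun i j => (WithLp.equiv 2 (Fin m → ℂ)) (b j) i) = 1 := by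
  ext i j
  have h := orthonormal_iff_ite.mp b.orthonormal i j
  rw [EuclideanSpace.inner_eq_star_dotProduct] at h
  simp only [Matrix.mul_apply, Matrix.conjTranspose_apply, Matrix.of_apply, Matrix.one_apply]
  rw [← h]
  simp [dotProduct, mul_comm]
end

open Matrix in
lemma takagi : ∀ (n : ℕ) (Z : Matrix (Fin n) (Fin n) ℂ), Zᵀ = Z →
    ∃ A ∈ Matrix.unitaryGroup (Fin n) ℂ, ∃ d : Fin n → ℝ, (∀ i, 0 ≤ d i) ∧
      Z = A * Matrix.diagonal (fun i => (d i : ℂ)) * Aᵀ := by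
  intro n
  induction n with
  | zero =>
    intro Z _
    exact ⟨1, one_mem _, 0, fun i => le_refl _, Subsingleton.elim _ _⟩
  | succ n ih =>
    intro Z hsym
    obtain ⟨σ, v, hσ0, hv1, hZv⟩ := singular_pair (n+1) (Nat.succ_pos n) Z hsym
    set vf : Fin (n+1) → ℂ := (WithLp.equiv 2 (Fin (n+1) → ℂ)) v with hvf
    -- orthonormal singleton family
    have horth : Orthonormal ℂ (Set.restrict {(0 : Fin (n+1))} (fun _ : Fin (n+1) => v)) := by
      rw [orthonormal_iff_ite]
      rintro ⟨i, hi⟩ ⟨j, hj⟩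
      simp only [Set.mem_singleton_iff] at hi hj
      subst hi; subst hj
      simp [Set.restrict, inner_self_eq_norm_sq_to_K, hv1]
    obtain ⟨b, hb⟩ := horth.exists_orthonormalBasis_extension_of_card_eq (by simp)
    have hb0 : b 0 = v := hb 0 rfl
    set U : Matrix (Fin (n+1)) (Fin (n+1)) ℂ :=
      Matrix.of (fun i j => (WithLp.equiv 2 (Fin (n+1) → ℂ)) (b j) i) with hU
    have hUU : Uᴴ * U = 1 := onb_unitary b
    have hUmem : U ∈ Matrix.unitaryGroup (Fin (n+1)) ℂ := Matrix.mem_unitaryGroup_iff'.mpr hUU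
    have hUUc : U * Uᴴ = 1 := Matrix.mem_unitaryGroup_iff.mp hUmem
    set Uc : Matrix (Fin (n+1)) (Fin (n+1)) ℂ := U.map (starRingEnd ℂ) with hUc
    have hUcT : Ucᵀ = Uᴴ := by ext i j; simp [hUc, Matrix.conjTranspose_apply, Matrix.map_apply]
    have hUcT' : Uᴴᵀ = Uc := by rw [← hUcT, Matrix.transpose_transpose]
    have hTUc : Uᵀ = Uᴴ.map (starRingEnd ℂ) := by
      ext i j; simp [Matrix.conjTranspose_apply, Matrix.map_apply]
    have hUcUT : Uc * Uᵀ = 1 := by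
      rw [hTUc, ← Matrix.map_mul, hUUc, Matrix.map_one _ (map_zero _) (map_one _)]
    have hUTUc : Uᵀ * Uc = 1 := by
      have := congrArg Matrix.transpose hUU
      rwa [Matrix.transpose_mul, hUcT', Matrix.transpose_one] at this
    set W : Matrix (Fin (n+1)) (Fin (n+1)) ℂ := Uᴴ * (Z * Uc) with hW
    have hZW : Z = U * W * Uᵀ := by
      rw [hW]
      calc Z = (U * Uᴴ) * Z * (Uc * Uᵀ) := by rw [hUUc, hUcUT, one_mul, mul_one]
      _ = U * (Uᴴ * (Z * Uc)) * Uᵀ := by simp only [Matrix.mul_assoc]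
    have hWsym : Wᵀ = W := by
      rw [hW, Matrix.transpose_mul, Matrix.transpose_mul, hUcT, hsym, hUcT', Matrix.mul_assoc]
    have hcol : ∀ k, W k 0 = (σ : ℂ) * (if k = 0 then 1 else 0) := by
      intro k
      have h1 : ∀ i, (Z * Uc) i 0 = (σ : ℂ) * vf i := by
        intro i
        have : (Z * Uc) i 0 = (Z *ᵥ star vf) i := by
          simp only [Matrix.mul_apply, Matrix.mulVec, dotProduct, hUc, Matrix.map_apply,
            hU, Matrix.of_apply, hb0, Pi.star_apply, hvf, RCLike.star_def]
        rw [this, hZv]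
        simp [hvf]
      have h2 : W k 0 = ∑ i, star (U i k) * ((σ : ℂ) * vf i) := by
        rw [hW, Matrix.mul_apply]
        exact Finset.sum_congr rfl fun i _ => by
          rw [Matrix.conjTranspose_apply, h1 i, RCLike.star_def]
      rw [h2]
      have h3 : ∑ i, star (U i k) * vf i = (inner ℂ (b k) (b 0) : ℂ) := by
        rw [EuclideanSpace.inner_eq_star_dotProduct, hb0]
        simp [dotProduct, hU, hvf, mul_comm]
      calc ∑ i, star (U i k) * ((σ:ℂ) * vf i) = (σ:ℂ) * ∑ i, star (U i k) * vf i := by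
            rw [Finset.mul_sum]; exact Finset.sum_congr rfl fun i _ => by ring
      _ = (σ:ℂ) * (if k = 0 then 1 else 0) := by
            rw [h3, orthonormal_iff_ite.mp b.orthonormal k 0]
    have hrow : ∀ k, W 0 k = (σ : ℂ) * (if k = 0 then 1 else 0) := by
      intro k
      have : W 0 k = Wᵀ k 0 := rfl
      rw [this, hWsym, hcol]
    -- block decomposition
    set e : Fin 1 ⊕ Fin n ≃ Fin (n+1) := finSumFinEquiv.trans (finCongr (Nat.add_comm 1 n)) with he
    have heinr : ∀ i : Fin n, e (Sum.inr i) ≠ 0 := by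
      intro i h
      have : (e (Sum.inr i) : ℕ) = 0 := by rw [h]; rfl
      simp [he, finSumFinEquiv, Fin.natAdd] at this
    have heinl : e (Sum.inl 0) = 0 := by
      simp [he, finSumFinEquiv]
      rfl
    set Z' : Matrix (Fin n) (Fin n) ℂ :=
      Matrix.of (fun i j => W (e (Sum.inr i)) (e (Sum.inr j))) with hZ'def
    have hZ'sym : Z'ᵀ = Z' := by
      ext i j
      simp only [hZ'def, Matrix.transpose_apply, Matrix.of_apply]
      exact congrFun (congrFun hWsym (e (Sum.inr i))) (e (Sum.inr j))
    obtain ⟨A', hA'mem, d', hd'0, hZ'⟩ := ih Z' hZ'sym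
    have hWblock : W.submatrix e e =
        Matrix.fromBlocks (Matrix.diagonal fun _ : Fin 1 => (σ:ℂ)) 0 0 Z' := by
      ext i j
      rcases i with i | i <;> rcases j with j | j
      · have hi : i = 0 := Subsingleton.elim _ _
        have hj : j = 0 := Subsingleton.elim _ _
        subst hi; subst hj
        simp only [Matrix.submatrix_apply, Matrix.fromBlocks_apply₁₁, heinl]
        rw [hcol 0]
        simp
      · simp only [Matrix.submatrix_apply, Matrix.fromBlocks_apply₁₂, Matrix.zero_apply]
        have hi : i = 0 := Subsingleton.elim _ _
        subst hi
        rw [heinl, hrow]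
        simp [heinr j]
      · simp only [Matrix.submatrix_apply, Matrix.fromBlocks_apply₂₁, Matrix.zero_apply]
        have hj : j = 0 := Subsingleton.elim _ _
        subst hj
        rw [heinl, hcol]
        simp [heinr i]
      · simp [hZ'def]
    -- assembly
    set Bs : Matrix (Fin (n+1)) (Fin (n+1)) ℂ :=
      (Matrix.fromBlocks (1 : Matrix (Fin 1) (Fin 1) ℂ) 0 0 A').submatrix e.symm e.symm with hBs
    set d : Fin (n+1) → ℝ := fun i => Sum.elim (fun _ => σ) d' (e.symm i) with hd
    have hA'unit : A'ᴴ * A' = 1 := Matrix.mem_unitaryGroup_iff'.mp hA'mem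
    have hBsmem : Bs ∈ Matrix.unitaryGroup (Fin (n+1)) ℂ := by
      rw [Matrix.mem_unitaryGroup_iff', Matrix.star_eq_conjTranspose, hBs,
        Matrix.conjTranspose_submatrix, Matrix.submatrix_mul_equiv,
        Matrix.fromBlocks_conjTranspose, Matrix.fromBlocks_multiply]
      simp [hA'unit, Matrix.fromBlocks_one]
    have hdiag : Matrix.diagonal (fun i => (d i : ℂ)) =
        (Matrix.diagonal (Sum.elim (fun _ : Fin 1 => (σ:ℂ)) (fun i => (d' i : ℂ)))).submatrix
          e.symm e.symm := by
      rw [Matrix.submatrix_diagonal_equiv]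
      apply congrArg Matrix.diagonal
      funext i
      rcases h : e.symm i with j | j <;> simp [hd, h]
    have hWeq : W = Bs * Matrix.diagonal (fun i => (d i : ℂ)) * Bsᵀ := by
      have hW2 : W = (W.submatrix e e).submatrix e.symm e.symm := by
        rw [Matrix.submatrix_submatrix, Equiv.self_comp_symm, Matrix.submatrix_id_id]
      rw [hW2, hWblock, hdiag, hBs, Matrix.transpose_submatrix, Matrix.submatrix_mul_equiv,
        Matrix.submatrix_mul_equiv]
      congr 1
      rw [← Matrix.fromBlocks_diagonal, Matrix.fromBlocks_transpose, Matrix.fromBlocks_multiply,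
        Matrix.fromBlocks_multiply, hZ']
      simp
    refine ⟨U * Bs, mul_mem hUmem hBsmem, d, ?_, ?_⟩
    · intro i
      rcases h : e.symm i with j | j <;> simp [hd, h, hσ0, hd'0]
    · rw [hZW, hWeq, Matrix.transpose_mul]
      simp only [Matrix.mul_assoc]

/-- **KA-decomposition for the type III domain.**
Let `Z` be a complex symmetric `n × n` matrix (`Zᵀ = Z`) such that `I_n - Z Z*` is
positive definite. Then there exist a unitary matrix `A ∈ U(n)` and a real diagonal
matrix `D` with diagonal entries in `[0,1)` such that `Z = A ⬝ D ⬝ Aᵀ`. -/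
theorem typeIII_KA_decomposition (n : ℕ)
    (Z : Matrix (Fin n) (Fin n) ℂ) (hsym : Zᵀ = Z) (hZ : (1 - Z * Zᴴ).PosDef) :
    ∃ A ∈ Matrix.unitaryGroup (Fin n) ℂ, ∃ d : Fin n → ℝ,
      (∀ i, 0 ≤ d i ∧ d i < 1) ∧
        Z = A * Matrix.diagonal (fun i => (d i : ℂ)) * Aᵀ := by
  obtain ⟨A, hAmem, d, hd0, hZeq⟩ := takagi n Z hsym
  set D : Matrix (Fin n) (Fin n) ℂ := Matrix.diagonal (fun i => (d i : ℂ)) with hD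
  have hAH : Aᴴ * A = 1 := Matrix.mem_unitaryGroup_iff'.mp hAmem
  have hAAH : A * Aᴴ = 1 := Matrix.mem_unitaryGroup_iff.mp hAmem
  set Ac : Matrix (Fin n) (Fin n) ℂ := A.map (starRingEnd ℂ) with hAc
  have hAcT : Acᵀ = Aᴴ := by ext i j; simp [hAc, Matrix.conjTranspose_apply, Matrix.map_apply]
  have hAcT' : Aᴴᵀ = Ac := by rw [← hAcT, Matrix.transpose_transpose]
  have hATAc : Aᵀ * Ac = 1 := by
    have := congrArg Matrix.transpose hAH
    rwa [Matrix.transpose_mul, hAcT', Matrix.transpose_one] at this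
  have hATH : Aᵀᴴ = Ac := by
    ext i j; simp [hAc, Matrix.conjTranspose_apply, Matrix.map_apply]
  have hDH : Dᴴ = D := by
    rw [hD, Matrix.diagonal_conjTranspose]
    apply congrArg Matrix.diagonal
    funext i
    rw [Pi.star_apply, RCLike.star_def, Complex.conj_ofReal]
  have hZH : Zᴴ = Ac * D * Aᴴ := by
    rw [hZeq, Matrix.conjTranspose_mul, Matrix.conjTranspose_mul, hDH, hATH, Matrix.mul_assoc]
  have hZZ : Z * Zᴴ = A * Matrix.diagonal (fun i => ((d i : ℂ))^2) * Aᴴ := by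
    rw [hZH]
    conv_lhs => rw [hZeq]
    have h2 : A * D * Aᵀ * (Ac * D * Aᴴ) = A * (D * ((Aᵀ * Ac) * (D * Aᴴ))) := by
      simp only [Matrix.mul_assoc]
    rw [h2, hATAc, one_mul, hD, ← Matrix.mul_assoc, ← Matrix.mul_assoc, Matrix.mul_assoc A,
      Matrix.diagonal_mul_diagonal]
    congr 2
    funext i
    ring
  have hsub : 1 - Z * Zᴴ = A * Matrix.diagonal (fun i => 1 - ((d i : ℂ))^2) * Aᴴ := by
    have h1 : (1 : Matrix (Fin n) (Fin n) ℂ) = A * 1 * Aᴴ := by rw [mul_one, hAAH]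
    rw [hZZ]
    conv_lhs => rw [h1]
    rw [← Matrix.sub_mul, ← Matrix.mul_sub]
    congr 2
    rw [← Matrix.diagonal_one, Matrix.diagonal_sub]
  refine ⟨A, hAmem, d, fun i => ⟨hd0 i, ?_⟩, hZeq⟩
  set x : Fin n → ℂ := A *ᵥ Pi.single i 1 with hx
  have hx0 : x ≠ 0 := by
    intro h
    have h1 : Aᴴ *ᵥ x = Aᴴ *ᵥ 0 := by rw [h]
    rw [hx, Matrix.mulVec_mulVec, hAH, Matrix.one_mulVec, Matrix.mulVec_zero] at h1
    have := congrFun h1 i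
    simp at this
  have hq := hZ.dotProduct_mulVec_pos hx0
  have hval : dotProduct (star x) ((1 - Z * Zᴴ) *ᵥ x) = ((1 - d i ^ 2 : ℝ) : ℂ) := by
    rw [hsub, hx, Matrix.mulVec_mulVec, Matrix.mul_assoc, Matrix.mul_assoc, hAH, mul_one]
    rw [Matrix.star_mulVec, Matrix.dotProduct_mulVec, Matrix.vecMul_vecMul,
      ← Matrix.mul_assoc, hAH, one_mul]
    simp [Matrix.vecMul_diagonal, dotProduct, Pi.single_apply, Finset.sum_ite_eq,
      Complex.ofReal_pow]
  rw [hval] at hq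
  have := Complex.zero_lt_real.mp hq
  nlinarith [hd0 i]
end

section
/- Let m = 2n + ε with n ≥ 1 and ε ∈ {0,1}, and let Z ∈ M_m(ℂ) be skew-symmetric (Zᵗ = −Z) with I_m − ZZ* positive definite. Then there exist A ∈ U(m) and t₁,…,t_n ∈ [0,1) such that Z = A·D(t)·Aᵗ, where D(t) ∈ M_m(ℂ) is the block-diagonal matrix whose j-th 2×2 diagonal block (for j = 1,…,n, starting from the upper-left corner) is [[0, t_j],[−t_j, 0]] and, when ε = 1, whose last row and column are zero. -/
open scoped Matrix ComplexOrder

/-- The block-diagonal skew-symmetric matrix `D(t)` of size `m = 2n + ε`, whose `j`-th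
`2 × 2` diagonal block is `[[0, t j], [-t j, 0]]` (and whose last row and column vanish
when `ε = 1`). -/
noncomputable def typeIIBlockDiag (n ε : ℕ) (t : Fin n → ℝ) :
    Matrix (Fin (2 * n + ε)) (Fin (2 * n + ε)) ℂ :=
  Matrix.of fun i j =>
    if h : (i : ℕ) % 2 = 0 ∧ (j : ℕ) = (i : ℕ) + 1 ∧ (i : ℕ) / 2 < n then
      (t ⟨(i : ℕ) / 2, h.2.2⟩ : ℂ)
    else if h' : (j : ℕ) % 2 = 0 ∧ (i : ℕ) = (j : ℕ) + 1 ∧ (j : ℕ) / 2 < n then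
      -(t ⟨(j : ℕ) / 2, h'.2.2⟩ : ℂ)
    else 0

open Matrix


-- skew form vanishes on the diagonal
lemma fromBlocks_sub {l o : Type*} (A A' : Matrix (Fin 2) (Fin 2) ℂ)
    (B B' : Matrix (Fin 2) l ℂ) (C C' : Matrix o (Fin 2) ℂ) (D D' : Matrix o l ℂ) :
    fromBlocks A B C D - fromBlocks A' B' C' D' =
      fromBlocks (A - A') (B - B') (C - C') (D - D') := by
  ext (i | i) (j | j) <;> simp [Matrix.fromBlocks]

lemma fin2_cases (a : Fin 2) : a = 0 ∨ a = 1 := by omega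

lemma inner_dot {N : ℕ} (x y : EuclideanSpace ℂ (Fin N)) :
    (inner ℂ x y : ℂ) = star (fun i => x i) ⬝ᵥ (fun i => y i) := by
  simp only [PiLp.inner_apply, RCLike.inner_apply, dotProduct, Pi.star_apply]
  exact Finset.sum_congr rfl fun i _ => mul_comm _ _

lemma skew_self_dot {m : ℕ} {Z : Matrix (Fin m) (Fin m) ℂ} (hskew : Zᵀ = -Z)
    (x : Fin m → ℂ) : x ⬝ᵥ (Z *ᵥ x) = 0 := by
  have h1 : x ⬝ᵥ (Z *ᵥ x) = (x ᵥ* Z) ⬝ᵥ x := dotProduct_mulVec x Z x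
  have h2 : x ᵥ* Z = -(Z *ᵥ x) := by
    rw [← mulVec_transpose, hskew, neg_mulVec]
  rw [h2, neg_dotProduct, dotProduct_comm (Z *ᵥ x) x] at h1
  exact add_self_eq_zero.mp (by linear_combination h1)

lemma dot_star_comm {m : ℕ} (x y : Fin m → ℂ) :
    star x ⬝ᵥ y = star (star y ⬝ᵥ x) := by
  simp only [dotProduct, star_sum, star_mul', star_star, Pi.star_apply]
  exact Finset.sum_congr rfl fun i _ => mul_comm _ _

lemma conj_mulVec {m : ℕ} (M : Matrix (Fin m) (Fin m) ℂ) (x : Fin m → ℂ) :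
    (M.map star) *ᵥ (star x) = star (M *ᵥ x) := by
  funext i
  simp [mulVec, dotProduct, star_sum, star_mul', map_apply, mul_comm]

lemma transpose_conjTranspose_eq_map_star {m : ℕ} (M : Matrix (Fin m) (Fin m) ℂ) :
    (Mᴴ)ᵀ = M.map star := by
  ext i j; simp [conjTranspose_apply, map_apply]

-- PosDef congruence
lemma posDef_conj {m : ℕ} {N A : Matrix (Fin m) (Fin m) ℂ} (hN : N.PosDef)
    (hA : Aᴴ * A = 1) : (Aᴴ * N * A).PosDef := by
  refine Matrix.PosDef.of_dotProduct_mulVec_pos (Matrix.isHermitian_conjTranspose_mul_mul A hN.1) fun x hx => ?_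
  have hAx : A *ᵥ x ≠ 0 := by
    intro h
    apply hx
    calc x = (Aᴴ * A) *ᵥ x := by rw [hA, one_mulVec]
    _ = Aᴴ *ᵥ (A *ᵥ x) := (mulVec_mulVec x Aᴴ A).symm
    _ = 0 := by rw [h, mulVec_zero]
  have := hN.dotProduct_mulVec_pos hAx
  calc (0:ℂ) < star (A *ᵥ x) ⬝ᵥ (N *ᵥ (A *ᵥ x)) := this
  _ = star x ⬝ᵥ ((Aᴴ * N * A) *ᵥ x) := by
      rw [star_mulVec, ← dotProduct_mulVec, mulVec_mulVec, mulVec_mulVec, Matrix.mul_assoc]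

lemma posDef_submatrix_equiv {l m : Type*} [Fintype l] [Fintype m] [DecidableEq l]
    [DecidableEq m] (e : l ≃ m) {M : Matrix m m ℂ} (hM : M.PosDef) :
    (M.submatrix e e).PosDef := by
  refine Matrix.PosDef.of_dotProduct_mulVec_pos ?_ fun x hx => ?_
  · have := hM.1
    unfold Matrix.IsHermitian at *
    rw [conjTranspose_submatrix, this]
  · have hy : (x ∘ e.symm) ≠ 0 := by
      intro h
      apply hx
      funext p
      have := congrFun h (e p)
      simpa using this
    have := hM.dotProduct_mulVec_pos hy
    have key : star x ⬝ᵥ ((M.submatrix e e) *ᵥ x) =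
        star (x ∘ e.symm) ⬝ᵥ (M *ᵥ (x ∘ e.symm)) := by
      rw [submatrix_mulVec_equiv]
      simp only [dotProduct, Function.comp]
      exact Fintype.sum_equiv e _ _ fun p => by simp [Pi.star_apply]
    rw [key]; exact this

lemma posDef_toBlocks₂₂ {l o : Type*} [Fintype l] [Fintype o] [DecidableEq l] [DecidableEq o]
    {M : Matrix (l ⊕ o) (l ⊕ o) ℂ} (hM : M.PosDef) : M.toBlocks₂₂.PosDef := by
  refine Matrix.PosDef.of_dotProduct_mulVec_pos ?_ fun x hx => ?_
  · have h := hM.1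
    ext i j
    have := congrFun (congrFun h (Sum.inr i)) (Sum.inr j)
    simpa [toBlocks₂₂, conjTranspose_apply] using this
  · have hy : (Sum.elim (0 : l → ℂ) x) ≠ 0 := by
      intro h
      apply hx
      funext i
      exact congrFun h (Sum.inr i)
    have := hM.dotProduct_mulVec_pos hy
    have hMv : ∀ i : o, (M *ᵥ Sum.elim (0 : l → ℂ) x) (Sum.inr i) = (M.toBlocks₂₂ *ᵥ x) i := by
      intro i
      simp [mulVec, dotProduct, Fintype.sum_sum_type, toBlocks₂₂]
    have key : star (Sum.elim (0 : l → ℂ) x) ⬝ᵥ (M *ᵥ Sum.elim (0 : l → ℂ) x) =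
        star x ⬝ᵥ (M.toBlocks₂₂ *ᵥ x) := by
      simp only [dotProduct, Fintype.sum_sum_type, Pi.star_apply, Sum.elim_inl, Sum.elim_inr,
        Pi.zero_apply, star_zero, zero_mul, Finset.sum_const_zero, zero_add]
      exact Finset.sum_congr rfl fun i _ => by rw [hMv]
    rw [← key]; exact this

lemma typeIIBlockDiag_zero (n ε : ℕ) : typeIIBlockDiag n ε (fun _ => 0) = 0 := by
  ext i j
  simp only [typeIIBlockDiag, of_apply, Matrix.zero_apply]
  split_ifs <;> simp

lemma tBD_pos (n ε : ℕ) (t : Fin n → ℝ) (x y : Fin (2*n+ε))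
    (h : (x:ℕ) % 2 = 0 ∧ (y:ℕ) = (x:ℕ) + 1 ∧ (x:ℕ)/2 < n) :
    typeIIBlockDiag n ε t x y = (t ⟨(x:ℕ)/2, h.2.2⟩ : ℂ) := by
  simp only [typeIIBlockDiag, of_apply]
  rw [dif_pos h]

lemma tBD_neg2 (n ε : ℕ) (t : Fin n → ℝ) (x y : Fin (2*n+ε))
    (h1 : ¬((x:ℕ) % 2 = 0 ∧ (y:ℕ) = (x:ℕ) + 1 ∧ (x:ℕ)/2 < n))
    (h : (y:ℕ) % 2 = 0 ∧ (x:ℕ) = (y:ℕ) + 1 ∧ (y:ℕ)/2 < n) :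
    typeIIBlockDiag n ε t x y = -(t ⟨(y:ℕ)/2, h.2.2⟩ : ℂ) := by
  simp only [typeIIBlockDiag, of_apply]
  rw [dif_neg h1, dif_pos h]

lemma tBD_zero (n ε : ℕ) (t : Fin n → ℝ) (x y : Fin (2*n+ε))
    (h1 : ¬((x:ℕ) % 2 = 0 ∧ (y:ℕ) = (x:ℕ) + 1 ∧ (x:ℕ)/2 < n))
    (h2 : ¬((y:ℕ) % 2 = 0 ∧ (x:ℕ) = (y:ℕ) + 1 ∧ (y:ℕ)/2 < n)) :
    typeIIBlockDiag n ε t x y = 0 := by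
  simp only [typeIIBlockDiag, of_apply]
  rw [dif_neg h1, dif_neg h2]

set_option maxHeartbeats 8000000 in
theorem aux (ε : ℕ) (hε : ε = 0 ∨ ε = 1) : ∀ (n : ℕ)
    (Z : Matrix (Fin (2*n+ε)) (Fin (2*n+ε)) ℂ), Zᵀ = -Z → (1 - Z * Zᴴ).PosDef →
    ∃ A ∈ Matrix.unitaryGroup (Fin (2*n+ε)) ℂ, ∃ t : Fin n → ℝ,
      (∀ j, 0 ≤ t j ∧ t j < 1) ∧ Z = A * typeIIBlockDiag n ε t * Aᵀ := by
  intro n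
  induction n with
  | zero =>
    intro Z hskew _
    refine ⟨1, Submonoid.one_mem _, Fin.elim0, fun j => j.elim0, ?_⟩
    have hZ0 : Z = 0 := by
      ext i j
      have hij : i = j := by
        have hi := i.2; have hj := j.2
        refine Fin.ext ?_
        omega
      subst hij
      have := congrFun (congrFun hskew i) i
      simp only [transpose_apply, Matrix.neg_apply] at this
      have h0 : Z i i = 0 := by linear_combination this / 2
      simpa using h0
    have hD0 : typeIIBlockDiag 0 ε Fin.elim0 = 0 := by
      ext i j
      simp only [typeIIBlockDiag, of_apply, Matrix.zero_apply]
      split_ifs with h1 h2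
      · exact absurd h1.2.2 (Nat.not_lt_zero _)
      · exact absurd h2.2.2 (Nat.not_lt_zero _)
      · rfl
    rw [hZ0, hD0, transpose_one, mul_one, one_mul]
  | succ n IH =>
    intro Z hskew hZ
    by_cases hZ0 : Z = 0
    · refine ⟨1, Submonoid.one_mem _, (fun _ => 0), fun j => ⟨le_refl 0, one_pos⟩, ?_⟩
      rw [hZ0, typeIIBlockDiag_zero, transpose_one, mul_one, mul_zero]
    · have hH : (Z * Zᴴ).IsHermitian := isHermitian_mul_conjTranspose_self Z
      obtain ⟨i₀, hi₀⟩ : ∃ i, hH.eigenvalues i ≠ 0 := by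
        by_contra hall
        push_neg at hall
        apply hZ0
        rw [← self_mul_conjTranspose_eq_zero (A := Z)]
        have hd : Matrix.diagonal (RCLike.ofReal ∘ hH.eigenvalues : _ → ℂ) = 0 := by
          rw [show (RCLike.ofReal ∘ hH.eigenvalues : _ → ℂ) = fun _ => 0 from
            funext fun i => by simp [hall i], diagonal_zero]
        rw [hH.spectral_theorem, hd, map_zero]
      set lam := hH.eigenvalues i₀ with hlamdef
      have hlampos : 0 < lam :=
        lt_of_le_of_ne ((posSemidef_self_mul_conjTranspose Z).eigenvalues_nonneg i₀) (Ne.symm hi₀)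
      set u : Fin (2*(n+1)+ε) → ℂ := ⇑(hH.eigenvectorBasis i₀) with hudef
      have hHu : (Z * Zᴴ) *ᵥ u = lam • u := hH.mulVec_eigenvectorBasis i₀
      have hu1 : star u ⬝ᵥ u = 1 := by
        have h2 := orthonormal_iff_ite.mp hH.eigenvectorBasis.orthonormal i₀ i₀
        rw [inner_dot] at h2
        simpa using h2
      have hlamlt : lam < 1 := by
        have hune : u ≠ 0 := by
          intro h
          rw [h] at hu1
          simp at hu1
        have hpos := hZ.dotProduct_mulVec_pos hune
        have hdot : star u ⬝ᵥ ((Z * Zᴴ) *ᵥ u) = (lam:ℂ) := by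
          rw [hHu, dotProduct_smul, hu1]
          simp [Complex.real_smul]
        rw [sub_mulVec, one_mulVec, dotProduct_sub, hu1, hdot] at hpos
        have h1 : (0:ℂ) < ((1 - lam : ℝ) : ℂ) := by push_cast; exact hpos
        rw [Complex.zero_lt_real] at h1
        linarith
      set σ := Real.sqrt lam with hσdef
      have hσpos : 0 < σ := Real.sqrt_pos.mpr hlampos
      have hσlt : σ < 1 := by
        have := Real.sqrt_lt_sqrt hlampos.le hlamlt
        simpa [Real.sqrt_one] using this
      have hσsq : σ^2 = lam := Real.sq_sqrt hlampos.le
      have hσC : (σ:ℂ) ≠ 0 := Complex.ofReal_ne_zero.mpr hσpos.ne'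
      set v : Fin (2*(n+1)+ε) → ℂ := (σ⁻¹:ℂ) • (Z *ᵥ star u) with hvdef
      have hZij : ∀ i j, Z j i = -Z i j := fun i j => by
        have := congrFun (congrFun hskew i) j
        simpa using this
      have hmapstar : Z.map star = -Zᴴ := by
        ext i j
        simp [map_apply, conjTranspose_apply, hZij i j]
      have hZu : Z *ᵥ star u = (σ:ℂ) • v := by
        rw [hvdef, smul_smul, mul_inv_cancel₀ hσC, one_smul]
      have hZHZ : Zᴴ * Z = (Z * Zᴴ).map star := by
        ext i j
        simp only [Matrix.mul_apply, map_apply, conjTranspose_apply, star_sum, star_mul',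
          star_star]
        refine Finset.sum_congr rfl fun l _ => ?_
        rw [hZij i l, hZij j l]
        simp
      have hZHZu : (Zᴴ * Z) *ᵥ star u = (lam:ℂ) • star u := by
        rw [hZHZ, conj_mulVec, hHu]
        funext i
        simp [Complex.real_smul]
      have hstarv : star v = (σ⁻¹:ℂ) • ((Z.map star) *ᵥ u) := by
        have h2 := conj_mulVec Z (star u)
        rw [star_star] at h2
        rw [hvdef, star_smul, ← h2]
        congr 1
        simp
      have hZv : Z *ᵥ star v = (-(σ:ℂ)) • u := by
        rw [hstarv, mulVec_smul, mulVec_mulVec, hmapstar, mul_neg, neg_mulVec, hHu]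
        funext i
        simp only [Pi.smul_apply, Pi.neg_apply, smul_eq_mul, Complex.real_smul]
        rw [show ((lam:ℂ)) = (σ:ℂ)^2 by rw [← hσsq]; push_cast; ring]
        field_simp
      have hvv : star v ⬝ᵥ v = 1 := by
        have h2 := conj_mulVec Z (star u)
        rw [star_star] at h2
        have h1 : (Z.map star *ᵥ u) ⬝ᵥ (Z *ᵥ star u) = (lam:ℂ) := by
          rw [h2, star_mulVec, star_star, ← dotProduct_mulVec, mulVec_mulVec, hZHZu,
            dotProduct_smul, dotProduct_comm, hu1]
          simp
        rw [hstarv, hvdef, smul_dotProduct, dotProduct_smul, h1]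
        rw [show ((lam:ℂ)) = (σ:ℂ)^2 by rw [← hσsq]; push_cast; ring]
        field_simp
        ring_nf
        rw [← mul_pow, mul_inv_cancel₀ hσC, one_pow]
      have huv : star u ⬝ᵥ v = 0 := by
        rw [hvdef, dotProduct_smul, skew_self_dot hskew (star u), smul_zero]
      have hvu : star v ⬝ᵥ u = 0 := by
        rw [dot_star_comm, huv, star_zero]
      -- orthonormal basis extension
      set i0 : Fin (2*(n+1)+ε) := ⟨0, by omega⟩ with hi0def
      set i1 : Fin (2*(n+1)+ε) := ⟨1, by omega⟩ with hi1def
      have hi01 : i0 ≠ i1 := by simp [hi0def, hi1def, Fin.ext_iff]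
      set w : Fin (2*(n+1)+ε) → EuclideanSpace ℂ (Fin (2*(n+1)+ε)) :=
        fun i => if i = i0 then (WithLp.toLp 2 v : EuclideanSpace ℂ (Fin (2*(n+1)+ε)))
          else (WithLp.toLp 2 u : EuclideanSpace ℂ (Fin (2*(n+1)+ε))) with hwdef
      have hw0 : w i0 = (WithLp.toLp 2 v : EuclideanSpace ℂ (Fin (2*(n+1)+ε))) := if_pos rfl
      have hw1 : w i1 = (WithLp.toLp 2 u : EuclideanSpace ℂ (Fin (2*(n+1)+ε))) := if_neg (Ne.symm hi01)
      have hww00 : (inner ℂ (w i0) (w i0) : ℂ) = 1 := by rw [hw0, inner_dot]; exact hvv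
      have hww01 : (inner ℂ (w i0) (w i1) : ℂ) = 0 := by rw [hw0, hw1, inner_dot]; exact hvu
      have hww10 : (inner ℂ (w i1) (w i0) : ℂ) = 0 := by rw [hw0, hw1, inner_dot]; exact huv
      have hww11 : (inner ℂ (w i1) (w i1) : ℂ) = 1 := by rw [hw1, inner_dot]; exact hu1
      have horth : Orthonormal ℂ (Set.restrict {i0, i1} w) := by
        rw [orthonormal_iff_ite]
        rintro ⟨p, hp⟩ ⟨q, hq⟩
        have hp' : p = i0 ∨ p = i1 := by simpa using hp
        have hq' : q = i0 ∨ q = i1 := by simpa using hq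
        rcases hp' with rfl | rfl <;> rcases hq' with rfl | rfl
        · rw [if_pos rfl]; exact hww00
        · rw [if_neg (by simp [hi01])]; exact hww01
        · rw [if_neg (by simp [Ne.symm hi01])]; exact hww10
        · rw [if_pos rfl]; exact hww11
      obtain ⟨b, hb⟩ := horth.exists_orthonormalBasis_extension_of_card_eq
        (by simp : Module.finrank ℂ (EuclideanSpace ℂ (Fin (2*(n+1)+ε))) =
          Fintype.card (Fin (2*(n+1)+ε)))
      have hbi0 : b i0 = (WithLp.toLp 2 v : EuclideanSpace ℂ (Fin (2*(n+1)+ε))) := by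
        rw [hb i0 (by simp), hw0]
      have hbi1 : b i1 = (WithLp.toLp 2 u : EuclideanSpace ℂ (Fin (2*(n+1)+ε))) := by
        rw [hb i1 (by simp), hw1]
      have hfun0 : (fun i => b i0 i) = v := by rw [hbi0]
      have hfun1 : (fun i => b i1 i) = u := by rw [hbi1]
      have onb : ∀ j k1, star (fun i => b j i) ⬝ᵥ (fun i => b k1 i) =
          if j = k1 then 1 else 0 := by
        intro j k1
        rw [← inner_dot]
        exact orthonormal_iff_ite.mp b.orthonormal j k1
      set A₀ : Matrix (Fin (2*(n+1)+ε)) (Fin (2*(n+1)+ε)) ℂ :=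
        Matrix.of (fun i j => b j i) with hA₀def
      have hA₀l : A₀ᴴ * A₀ = 1 := by
        ext j k1
        rw [Matrix.mul_apply, Matrix.one_apply]
        have h5 := onb j k1
        simpa [dotProduct, conjTranspose_apply, hA₀def] using h5
      have hA₀mem : A₀ ∈ Matrix.unitaryGroup (Fin (2*(n+1)+ε)) ℂ := by
        rw [Matrix.mem_unitaryGroup_iff', star_eq_conjTranspose]
        exact hA₀l
      have hA₀r : A₀ * A₀ᴴ = 1 := by
        have h5 := Matrix.mem_unitaryGroup_iff.mp hA₀mem
        rwa [star_eq_conjTranspose] at h5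
      have hA₀conj : A₀.map star * A₀ᵀ = 1 := by
        have h3 := congrArg Matrix.transpose hA₀r
        rwa [transpose_mul, transpose_one, transpose_conjTranspose_eq_map_star] at h3
      set M' := A₀ᴴ * Z * A₀.map star with hM'def
      have hM'app : ∀ j k1, M' j k1 =
          star (fun i => b j i) ⬝ᵥ (Z *ᵥ star (fun i => b k1 i)) := by
        intro j k1
        rw [hM'def]
        simp only [hA₀def, Matrix.mul_apply, conjTranspose_apply, map_apply, of_apply,
          dotProduct, mulVec, Pi.star_apply, Finset.sum_mul, Finset.mul_sum]
        rw [Finset.sum_comm]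
        refine Finset.sum_congr rfl fun i _ => Finset.sum_congr rfl fun l _ => ?_
        ring
      have hM'col0 : ∀ j, M' j i0 = -(σ:ℂ) * (if j = i1 then 1 else 0) := by
        intro j
        rw [hM'app, hfun0, hZv, dotProduct_smul, ← hfun1, onb j i1]
        simp
      have hM'col1 : ∀ j, M' j i1 = (σ:ℂ) * (if j = i0 then 1 else 0) := by
        intro j
        rw [hM'app, hfun1, hZu, dotProduct_smul, ← hfun0, onb j i0]
        simp
      have hvZ : star v ᵥ* Z = (σ:ℂ) • u := by
        rw [← mulVec_transpose, hskew, neg_mulVec, hZv]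
        funext i; simp
      have huZ : star u ᵥ* Z = -((σ:ℂ) • v) := by
        rw [← mulVec_transpose, hskew, neg_mulVec, hZu]
      have hM'row0 : ∀ k1, M' i0 k1 = (σ:ℂ) * (if k1 = i1 then 1 else 0) := by
        intro k1
        rw [hM'app, hfun0, dotProduct_mulVec, hvZ, smul_dotProduct, dotProduct_comm,
          ← hfun1, onb k1 i1]
        simp
      have hM'row1 : ∀ k1, M' i1 k1 = -(σ:ℂ) * (if k1 = i0 then 1 else 0) := by
        intro k1
        rw [hM'app, hfun1, dotProduct_mulVec, huZ, neg_dotProduct, smul_dotProduct,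
          dotProduct_comm, ← hfun0, onb k1 i0]
        split_ifs <;> simp
      -- reindexing and block structure
      set e : Fin 2 ⊕ Fin (2*n+ε) ≃ Fin (2*(n+1)+ε) :=
        finSumFinEquiv.trans (finCongr (by omega)) with hedef
      have heL : ∀ a : Fin 2, ((e (Sum.inl a)) : ℕ) = (a : ℕ) := by
        intro a; simp [hedef, finSumFinEquiv_apply_left]
      have heR : ∀ i : Fin (2*n+ε), ((e (Sum.inr i)) : ℕ) = 2 + (i : ℕ) := by
        intro i; simp [hedef, finSumFinEquiv_apply_right]
      have heL0 : e (Sum.inl 0) = i0 := by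
        apply Fin.ext; rw [heL]; simp [hi0def]
      have heL1 : e (Sum.inl 1) = i1 := by
        apply Fin.ext; rw [heL]; simp [hi1def]
      have hne0 : ∀ i, e (Sum.inr i) ≠ i0 := by
        intro i h
        have h6 := congrArg Fin.val h
        rw [heR] at h6
        simp [hi0def] at h6
      have hne1 : ∀ i, e (Sum.inr i) ≠ i1 := by
        intro i h
        have h6 := congrArg Fin.val h
        rw [heR] at h6
        rw [hi1def] at h6
        simp only [] at h6
        omega
      set Z'' : Matrix (Fin (2*n+ε)) (Fin (2*n+ε)) ℂ :=
        Matrix.of (fun i j => M' (e (Sum.inr i)) (e (Sum.inr j))) with hZ''def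
      set J : Matrix (Fin 2) (Fin 2) ℂ := !![0, (σ:ℂ); -(σ:ℂ), 0] with hJdef
      have hW : M'.submatrix e e = Matrix.fromBlocks J 0 0 Z'' := by
        ext p q
        rcases p with a | i <;> rcases q with c | j
        · rcases fin2_cases a with rfl | rfl <;> rcases fin2_cases c with rfl | rfl
          · rw [submatrix_apply, heL0, hM'row0, if_neg hi01]
            simp [hJdef]
          · rw [submatrix_apply, heL0, heL1, hM'row0, if_pos rfl]
            simp [hJdef]
          · rw [submatrix_apply, heL1, heL0, hM'row1, if_pos rfl]
            simp [hJdef]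
          · rw [submatrix_apply, heL1, hM'row1, if_neg (Ne.symm hi01)]
            simp [hJdef]
        · rcases fin2_cases a with rfl | rfl
          · rw [submatrix_apply, heL0, hM'row0, if_neg (hne1 j)]
            simp
          · rw [submatrix_apply, heL1, hM'row1, if_neg (hne0 j)]
            simp
        · rcases fin2_cases c with rfl | rfl
          · rw [submatrix_apply, heL0, hM'col0, if_neg (hne1 i)]
            simp
          · rw [submatrix_apply, heL1, hM'col1, if_neg (hne0 i)]
            simp
        · simp [hZ''def]
      have hM'skew : M'ᵀ = -M' := by
        have h1 : (A₀.map star)ᵀ = A₀ᴴ := by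
          ext i j; simp [conjTranspose_apply, map_apply]
        rw [hM'def, transpose_mul, transpose_mul, h1, transpose_conjTranspose_eq_map_star, hskew]
        simp [Matrix.mul_assoc, Matrix.neg_mul, Matrix.mul_neg]
      have hZ''skew : Z''ᵀ = -Z'' := by
        ext i j
        have h6 := congrFun (congrFun hM'skew (e (Sum.inr i))) (e (Sum.inr j))
        simpa [hZ''def, transpose_apply, Matrix.neg_apply] using h6
      have hM'prod : M' * M'ᴴ = A₀ᴴ * (Z * Zᴴ) * A₀ := by
        have h1 : (A₀.map star)ᴴ = A₀ᵀ := by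
          ext i j; simp [conjTranspose_apply, map_apply]
        rw [hM'def, conjTranspose_mul, conjTranspose_mul, conjTranspose_conjTranspose, h1]
        simp only [Matrix.mul_assoc]
        rw [← Matrix.mul_assoc (A₀.map star) A₀ᵀ _, hA₀conj, one_mul]
      have hpd' : (1 - M' * M'ᴴ).PosDef := by
        have h2 : A₀ᴴ * (1 - Z * Zᴴ) * A₀ = 1 - A₀ᴴ * (Z * Zᴴ) * A₀ := by
          rw [Matrix.mul_sub, Matrix.mul_one, Matrix.sub_mul, hA₀l]
        rw [hM'prod, ← h2]
        exact posDef_conj hZ hA₀l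
      have hpdZ'' : (1 - Z'' * Z''ᴴ).PosDef := by
        have h3 : (1 - M' * M'ᴴ).submatrix e e =
            1 - (M'.submatrix e e) * ((M'.submatrix e e)ᴴ) := by
          simp only [submatrix_sub, Pi.sub_apply, submatrix_one_equiv, conjTranspose_submatrix,
            submatrix_mul_equiv]
        have hpdW : (1 - (Matrix.fromBlocks J 0 0 Z'') *
            (Matrix.fromBlocks J 0 0 Z'')ᴴ).PosDef := by
          rw [← hW, ← h3]
          exact posDef_submatrix_equiv e hpd'
        have h4 : (1 : Matrix (Fin 2 ⊕ Fin (2*n+ε)) (Fin 2 ⊕ Fin (2*n+ε)) ℂ) -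
            (Matrix.fromBlocks J 0 0 Z'') * (Matrix.fromBlocks J 0 0 Z'')ᴴ
            = Matrix.fromBlocks (1 - J * Jᴴ) 0 0 (1 - Z'' * Z''ᴴ) := by
          rw [fromBlocks_conjTranspose, fromBlocks_multiply]
          simp only [Matrix.mul_zero, Matrix.zero_mul, add_zero, zero_add, conjTranspose_zero]
          rw [← fromBlocks_one, fromBlocks_sub]
          simp
        rw [h4] at hpdW
        have h5 := posDef_toBlocks₂₂ hpdW
        rwa [toBlocks_fromBlocks₂₂] at h5
      obtain ⟨B, hBmem, t', ht', hZ''dec⟩ := IH Z'' hZ''skew hpdZ''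
      set t : Fin (n+1) → ℝ := Fin.cases σ t' with htdef
      have ht0 : t 0 = σ := by rw [htdef]; simp
      have htsucc : ∀ x : Fin n, t x.succ = t' x := fun x => by rw [htdef]; simp
      have hval0 : ((i0 : Fin (2*(n+1)+ε)) : ℕ) = 0 := rfl
      have hval1 : ((i1 : Fin (2*(n+1)+ε)) : ℕ) = 1 := rfl
      have hD : (typeIIBlockDiag (n+1) ε t).submatrix e e =
          Matrix.fromBlocks J 0 0 (typeIIBlockDiag n ε t') := by
        ext p q
        rcases p with a | i <;> rcases q with c | j
        · rcases fin2_cases a with rfl | rfl <;> rcases fin2_cases c with rfl | rfl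
          · rw [submatrix_apply, heL0, tBD_zero (n+1) ε t i0 i0 (by omega) (by omega)]
            simp [hJdef]
          · rw [submatrix_apply, heL0, heL1,
              tBD_pos (n+1) ε t i0 i1 ⟨by omega, by omega, by omega⟩,
              show ∀ hh : ((i0 : Fin (2*(n+1)+ε)):ℕ)/2 < n+1,
                (⟨((i0 : Fin (2*(n+1)+ε)):ℕ)/2, hh⟩ : Fin (n+1)) = 0 from
                fun hh => Fin.ext (by simp [hval0]), ht0]
            simp [hJdef]
          · rw [submatrix_apply, heL1, heL0,
              tBD_neg2 (n+1) ε t i1 i0 (by omega) ⟨by omega, by omega, by omega⟩,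
              show ∀ hh : ((i0 : Fin (2*(n+1)+ε)):ℕ)/2 < n+1,
                (⟨((i0 : Fin (2*(n+1)+ε)):ℕ)/2, hh⟩ : Fin (n+1)) = 0 from
                fun hh => Fin.ext (by simp [hval0]), ht0]
            simp [hJdef]
          · rw [submatrix_apply, heL1, tBD_zero (n+1) ε t i1 i1 (by omega) (by omega)]
            simp [hJdef]
        · have hvj : ((e (Sum.inr j)) : ℕ) = 2 + (j:ℕ) := heR j
          rcases fin2_cases a with rfl | rfl
          · rw [submatrix_apply, heL0,
              tBD_zero (n+1) ε t i0 (e (Sum.inr j)) (by omega) (by omega)]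
            simp
          · rw [submatrix_apply, heL1,
              tBD_zero (n+1) ε t i1 (e (Sum.inr j)) (by omega) (by omega)]
            simp
        · have hvi : ((e (Sum.inr i)) : ℕ) = 2 + (i:ℕ) := heR i
          rcases fin2_cases c with rfl | rfl
          · rw [submatrix_apply, heL0,
              tBD_zero (n+1) ε t (e (Sum.inr i)) i0 (by omega) (by omega)]
            simp
          · rw [submatrix_apply, heL1,
              tBD_zero (n+1) ε t (e (Sum.inr i)) i1 (by omega) (by omega)]
            simp
        · have hvi : ((e (Sum.inr i)) : ℕ) = 2 + (i:ℕ) := heR i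
          have hvj : ((e (Sum.inr j)) : ℕ) = 2 + (j:ℕ) := heR j
          rw [submatrix_apply,
            show (Matrix.fromBlocks J 0 0 (typeIIBlockDiag n ε t')) (Sum.inr i) (Sum.inr j) =
              typeIIBlockDiag n ε t' i j from rfl]
          by_cases hc1 : ((i:ℕ) % 2 = 0 ∧ (j:ℕ) = (i:ℕ) + 1 ∧ (i:ℕ)/2 < n)
          · rw [tBD_pos (n+1) ε t (e (Sum.inr i)) (e (Sum.inr j))
                ⟨by omega, by omega, by omega⟩,
              show ∀ hh : ((e (Sum.inr i)):ℕ)/2 < n+1,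
                (⟨((e (Sum.inr i)):ℕ)/2, hh⟩ : Fin (n+1)) = Fin.succ ⟨(i:ℕ)/2, hc1.2.2⟩ from
                fun hh => Fin.ext (by simp only [Fin.val_succ, hvi]; omega),
              htsucc, tBD_pos n ε t' i j hc1]
          · by_cases hc2 : ((j:ℕ) % 2 = 0 ∧ (i:ℕ) = (j:ℕ) + 1 ∧ (j:ℕ)/2 < n)
            · rw [tBD_neg2 (n+1) ε t (e (Sum.inr i)) (e (Sum.inr j)) (by omega)
                  ⟨by omega, by omega, by omega⟩,
                show ∀ hh : ((e (Sum.inr j)):ℕ)/2 < n+1,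
                  (⟨((e (Sum.inr j)):ℕ)/2, hh⟩ : Fin (n+1)) = Fin.succ ⟨(j:ℕ)/2, hc2.2.2⟩ from
                  fun hh => Fin.ext (by simp only [Fin.val_succ, hvj]; omega),
                htsucc, tBD_neg2 n ε t' i j hc1 hc2]
            · rw [tBD_zero (n+1) ε t (e (Sum.inr i)) (e (Sum.inr j)) (by omega) (by omega),
                tBD_zero n ε t' i j hc1 hc2]
      -- assemble the unitary
      set Esum : Matrix (Fin 2 ⊕ Fin (2*n+ε)) (Fin 2 ⊕ Fin (2*n+ε)) ℂ :=
        Matrix.fromBlocks 1 0 0 B with hEdef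
      set Ef := Esum.submatrix e.symm e.symm with hEfdef
      have hBu : B * Bᴴ = 1 := by
        have h5 := Matrix.mem_unitaryGroup_iff.mp hBmem
        rwa [star_eq_conjTranspose] at h5
      have hEfmem : Ef ∈ Matrix.unitaryGroup (Fin (2*(n+1)+ε)) ℂ := by
        rw [Matrix.mem_unitaryGroup_iff, star_eq_conjTranspose, hEfdef, conjTranspose_submatrix,
          submatrix_mul_equiv]
        have h5 : Esum * Esumᴴ = 1 := by
          rw [hEdef, fromBlocks_conjTranspose, fromBlocks_multiply]
          simp only [conjTranspose_zero, conjTranspose_one, Matrix.mul_one, Matrix.mul_zero,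
            Matrix.zero_mul, Matrix.one_mul, add_zero, zero_add, hBu]
          exact fromBlocks_one
        rw [h5, submatrix_one_equiv]
      refine ⟨A₀ * Ef, Submonoid.mul_mem _ hA₀mem hEfmem, t, ?_, ?_⟩
      · intro j
        refine Fin.cases ?_ ?_ j
        · rw [ht0]
          exact ⟨hσpos.le, hσlt⟩
        · intro jj
          rw [htsucc]
          exact ht' jj
      · have hDrev : typeIIBlockDiag (n+1) ε t =
            (Matrix.fromBlocks J 0 0 (typeIIBlockDiag n ε t')).submatrix e.symm e.symm := by
          rw [← hD, submatrix_submatrix]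
          rw [show ((e : Fin 2 ⊕ Fin (2*n+ε) → Fin (2*(n+1)+ε)) ∘ (e.symm : _ → _)) = id from
            funext fun x => e.apply_symm_apply x]
          rw [submatrix_id_id]
        have h8 : Matrix.fromBlocks J 0 0 Z'' =
            Esum * (Matrix.fromBlocks J 0 0 (typeIIBlockDiag n ε t')) * Esumᵀ := by
          rw [hEdef, fromBlocks_transpose, fromBlocks_multiply, fromBlocks_multiply, hZ''dec]
          simp only [transpose_zero, transpose_one, Matrix.mul_zero, Matrix.zero_mul,
            Matrix.mul_one, Matrix.one_mul, add_zero, zero_add]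
        have hfromW : M' = Ef * typeIIBlockDiag (n+1) ε t * Efᵀ := by
          have h7 : M' = (M'.submatrix e e).submatrix e.symm e.symm := by
            rw [submatrix_submatrix]
            rw [show ((e : Fin 2 ⊕ Fin (2*n+ε) → Fin (2*(n+1)+ε)) ∘ (e.symm : _ → _)) = id from
              funext fun x => e.apply_symm_apply x]
            rw [submatrix_id_id]
          rw [h7, hW, h8]
          rw [← submatrix_mul_equiv (Esum * Matrix.fromBlocks J 0 0 (typeIIBlockDiag n ε t'))
            Esumᵀ e.symm e.symm e.symm]
          rw [← submatrix_mul_equiv Esum (Matrix.fromBlocks J 0 0 (typeIIBlockDiag n ε t'))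
            e.symm e.symm e.symm]
          rw [← hDrev, ← transpose_submatrix, ← hEfdef]
        have hZfinal : Z = A₀ * M' * A₀ᵀ := by
          rw [hM'def]
          rw [show A₀ * (A₀ᴴ * Z * A₀.map star) * A₀ᵀ =
            (A₀ * A₀ᴴ) * Z * (A₀.map star * A₀ᵀ) from by noncomm_ring]
          rw [hA₀r, hA₀conj, one_mul, Matrix.mul_one]
        rw [hZfinal, hfromW, transpose_mul]
        simp only [Matrix.mul_assoc]



/-- **KA-decomposition for the type II domain.**
Let `m = 2n + ε` with `n ≥ 1` and `ε ∈ {0, 1}`, and let `Z` be a skew-symmetric complex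
`m × m` matrix (`Zᵀ = -Z`) with `I_m - Z Z*` positive definite. Then there exist a
unitary `A ∈ U(m)` and `t₁, …, t_n ∈ [0,1)` with `Z = A ⬝ D(t) ⬝ Aᵀ`, where `D(t)` is
block-diagonal with `j`-th `2 × 2` block `[[0, t_j], [-t_j, 0]]` and, when `ε = 1`,
vanishing last row and column. -/
theorem typeII_KA_decomposition (n ε : ℕ) (hn : 1 ≤ n) (hε : ε = 0 ∨ ε = 1)
    (Z : Matrix (Fin (2 * n + ε)) (Fin (2 * n + ε)) ℂ)
    (hskew : Zᵀ = -Z) (hZ : (1 - Z * Zᴴ).PosDef) :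
    ∃ A ∈ Matrix.unitaryGroup (Fin (2 * n + ε)) ℂ, ∃ t : Fin n → ℝ,
      (∀ j, 0 ≤ t j ∧ t j < 1) ∧ Z = A * typeIIBlockDiag n ε t * Aᵀ := by
  exact aux ε hε n Z hskew hZ
end

section
/- Let λ > 1 be real and let ψ : 𝔻 → ℂ be bounded and measurable. Then ψ is radial (i.e., for every θ ∈ ℝ, ψ(e^{iθ}z) = ψ(z) for almost every z ∈ 𝔻) if and only if for all integers j, k ≥ 0 with j ≠ k one has ∫_𝔻 ψ(z) z^j (conj z)^k (1−|z|²)^{λ−2} dA(z) = 0. -/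
open MeasureTheory
open Complex

/-- The open unit disc `𝔻 = {z ∈ ℂ : |z| < 1}`. -/
def unitDisc : Set ℂ := {z | ‖z‖ < 1}

lemma unitDisc_eq : unitDisc = Metric.ball (0:ℂ) 1 := by
  ext z; simp [unitDisc, Metric.mem_ball, Complex.dist_eq]

lemma unitDisc_meas : MeasurableSet unitDisc := by
  rw [unitDisc_eq]; exact measurableSet_ball

lemma rot_integral (θ : ℝ) (f : ℂ → ℂ) :
    ∫ z in unitDisc, f (Complex.exp (θ * Complex.I) * z) = ∫ z in unitDisc, f z := by
  set u : Circle := Circle.exp θ with hu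
  have hcoe : (u : ℂ) = Complex.exp (θ * Complex.I) := by
    simp [hu, Circle.coe_exp]
  have hmp : MeasurePreserving (rotation u) volume volume :=
    (rotation u).measurePreserving
  have hpre : (rotation u) ⁻¹' unitDisc = unitDisc := by
    ext z
    simp [unitDisc, rotation_apply, norm_mul, Circle.norm_coe]
  have h2 : MeasurePreserving (rotation u) (volume.restrict unitDisc)
      (volume.restrict unitDisc) := by
    have := hmp.restrict_preimage (s := unitDisc) unitDisc_meas
    rwa [hpre] at this
  have hemb : MeasurableEmbedding (rotation u) :=
    (rotation u).toHomeomorph.measurableEmbedding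
  have := h2.integral_comp hemb f
  simp only [rotation_apply, hcoe] at this
  exact this

lemma beta1d {s : ℝ} (hs : -1 < s) :
    IntegrableOn (fun r : ℝ => (1 - r) ^ s) (Set.Ioo (0:ℝ) 1) := by
  have h1 : IntervalIntegrable (fun x : ℝ => x ^ s) volume 0 1 :=
    intervalIntegral.intervalIntegrable_rpow' hs
  have h2 : IntervalIntegrable (fun x : ℝ => (1 - x) ^ s) volume (1-0) (1-1) :=
    h1.comp_sub_left 1
  simp only [sub_zero, sub_self] at h2
  have h3 := h2.symm
  rw [intervalIntegrable_iff] at h3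
  simp only [Set.uIoc_of_le (zero_le_one' ℝ)] at h3
  exact h3.mono_set Set.Ioo_subset_Ioc_self

lemma beta1d' {s : ℝ} (hs : -1 < s) :
    IntegrableOn (fun r : ℝ => r * (1 - r ^ 2) ^ s) (Set.Ioo (0:ℝ) 1) := by
  set C : ℝ := max 1 ((2:ℝ) ^ s) with hC
  have hC0 : 0 ≤ C := le_trans zero_le_one (le_max_left _ _)
  apply Integrable.mono' ((beta1d hs).const_mul C)
  · have hm : Measurable fun r : ℝ => r * (1 - r ^ 2) ^ s := by fun_prop
    exact hm.aestronglyMeasurable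
  · filter_upwards [ae_restrict_mem measurableSet_Ioo] with r hr
    obtain ⟨hr0, hr1⟩ := hr
    have h1r : (0:ℝ) ≤ 1 - r := by linarith
    have h1r' : (0:ℝ) ≤ 1 + r := by linarith
    have hfac : 1 - r ^ 2 = (1 - r) * (1 + r) := by ring
    have hnn : (0:ℝ) ≤ 1 - r ^ 2 := by nlinarith
    rw [Real.norm_eq_abs, _root_.abs_of_nonneg (by positivity)]
    have heq : (1 - r ^ 2) ^ s = (1 - r) ^ s * (1 + r) ^ s := by
      rw [hfac, Real.mul_rpow h1r h1r']
    rw [heq]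
    have hb : (1 + r) ^ s ≤ C := by
      rcases le_or_gt 0 s with h | h
      · refine le_trans ?_ (le_max_right _ _)
        exact Real.rpow_le_rpow h1r' (by linarith) h
      · refine le_trans ?_ (le_max_left _ _)
        exact Real.rpow_le_one_of_one_le_of_nonpos (by linarith) h.le
    calc r * ((1 - r) ^ s * (1 + r) ^ s) ≤ 1 * ((1 - r) ^ s * C) := by
          apply mul_le_mul hr1.le ?_ (by positivity) zero_le_one
          exact mul_le_mul_of_nonneg_left hb (Real.rpow_nonneg h1r s)
      _ = C * (1 - r) ^ s := by ring

lemma w2d {s : ℝ} (hs : -1 < s) :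
    IntegrableOn (fun p : ℝ × ℝ => (1 - (p.1^2 + p.2^2)) ^ s)
      {p : ℝ × ℝ | p.1^2 + p.2^2 < 1} := by
  set g : ℝ × ℝ → ℝ := fun p => (1 - (p.1^2 + p.2^2)) ^ s with hg
  set T : Set (ℝ × ℝ) := Set.Ioo (0:ℝ) 1 ×ˢ Set.Ioo (-Real.pi) Real.pi with hT
  have hTm : MeasurableSet T := (measurableSet_Ioo).prod measurableSet_Ioo
  set B : ℝ × ℝ → ℝ × ℝ →L[ℝ] ℝ × ℝ := fun p =>
    LinearMap.toContinuousLinearMap (Matrix.toLin (Module.Basis.finTwoProd ℝ) (Module.Basis.finTwoProd ℝ)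
      !![Real.cos p.2, -p.1 * Real.sin p.2; Real.sin p.2, p.1 * Real.cos p.2]) with hB
  have hder : ∀ p ∈ T, HasFDerivWithinAt polarCoord.symm (B p) T p := fun p _ =>
    (hasFDerivAt_polarCoord_symm p).hasFDerivWithinAt
  have B_det : ∀ p, (B p).det = p.1 := by
    intro p
    conv_rhs => rw [← one_mul p.1, ← Real.cos_sq_add_sin_sq p.2]
    simp only [hB, neg_mul, LinearMap.det_toContinuousLinearMap, LinearMap.det_toLin,
      Matrix.det_fin_two_of, sub_neg_eq_add]
    ring
  have hinj : Set.InjOn polarCoord.symm T := by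
    apply polarCoord.symm.injOn.mono
    intro p hp
    rw [OpenPartialHomeomorph.symm_source, polarCoord_target]
    exact ⟨hp.1.1, hp.2⟩
  have hiff := integrableOn_image_iff_integrableOn_abs_det_fderiv_smul volume hTm hder hinj g
  have hrect : IntegrableOn (fun p : ℝ × ℝ => |(B p).det| • g (polarCoord.symm p)) T := by
    have h1 : IntegrableOn (fun p : ℝ × ℝ => p.1 * (1 - p.1^2) ^ s) T := by
      rw [IntegrableOn, hT, Measure.volume_eq_prod, ← Measure.prod_restrict]
      have hone : Integrable (fun _ : ℝ => (1:ℝ))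
          (volume.restrict (Set.Ioo (-Real.pi) Real.pi)) := integrable_const 1
      have hfg := Integrable.mul_prod (L := ℝ) (beta1d' hs) hone
      exact hfg.congr (Filter.Eventually.of_forall fun p => mul_one _)
    apply h1.congr_fun ?_ hTm
    intro p hp
    simp only [B_det, polarCoord_symm_apply, smul_eq_mul, hg]
    have : (p.1 * Real.cos p.2) ^ 2 + (p.1 * Real.sin p.2) ^ 2 = p.1 ^ 2 := by
      have := Real.sin_sq_add_cos_sq p.2; nlinarith [this]
    rw [this, abs_of_pos hp.1.1]
  have hS : IntegrableOn g (polarCoord.symm '' T) := hiff.mpr hrect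
  have hnull : volume {p : ℝ × ℝ | p.2 = 0} = 0 := by
    have : {p : ℝ × ℝ | p.2 = 0} = (Set.univ : Set ℝ) ×ˢ ({0} : Set ℝ) := by
      ext ⟨a, b⟩; simp [eq_comm]
    rw [this, Measure.volume_eq_prod, Measure.prod_prod]
    simp
  have hsub : {p : ℝ × ℝ | p.1^2 + p.2^2 < 1} ⊆
      (polarCoord.symm '' T) ∪ {p : ℝ × ℝ | p.2 = 0} := by
    intro p hp
    rcases eq_or_ne p.2 0 with h2 | h2
    · exact Or.inr h2
    · left
      have hsrc : p ∈ polarCoord.source := Or.inr h2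
      have htar := polarCoord.map_source hsrc
      rw [polarCoord_target] at htar
      have hlt : (polarCoord p).1 < 1 := by
        simp only [polarCoord_apply]
        rw [show (1:ℝ) = Real.sqrt 1 by simp]
        exact Real.sqrt_lt_sqrt (by positivity) hp
      refine ⟨polarCoord p, ⟨⟨htar.1, hlt⟩, htar.2⟩, polarCoord.left_inv hsrc⟩
  apply IntegrableOn.mono_set _ hsub
  apply hS.union
  rw [IntegrableOn, Measure.restrict_eq_zero.mpr hnull]
  exact integrable_zero_measure

lemma w_int {s : ℝ} (hs : -1 < s) :
    IntegrableOn (fun z : ℂ => (1 - ‖z‖^2) ^ s) unitDisc := by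
  have hmp : MeasurePreserving Complex.measurableEquivRealProd volume volume :=
    Complex.volume_preserving_equiv_real_prod
  have hpre : Complex.measurableEquivRealProd ⁻¹' {p : ℝ × ℝ | p.1^2 + p.2^2 < 1} = unitDisc := by
    ext z
    simp only [Set.mem_preimage, Complex.measurableEquivRealProd, Set.mem_setOf_eq, unitDisc]
    constructor
    · intro h
      have : ‖z‖^2 < 1 := by
        rw [Complex.sq_norm, Complex.normSq_apply]
        convert h using 1 <;> ring_nf <;> rfl
      nlinarith [norm_nonneg z]
    · intro h
      have h2 : ‖z‖^2 < 1 := by nlinarith [norm_nonneg z]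
      rw [Complex.sq_norm, Complex.normSq_apply] at h2
      convert h2 using 1 <;> ring_nf <;> rfl
  have h2 : MeasurePreserving Complex.measurableEquivRealProd
      (volume.restrict unitDisc)
      (volume.restrict {p : ℝ × ℝ | p.1^2 + p.2^2 < 1}) := by
    have hms : MeasurableSet {p : ℝ × ℝ | p.1^2 + p.2^2 < 1} := by
      apply measurableSet_lt <;> fun_prop
    have := hmp.restrict_preimage (s := {p : ℝ × ℝ | p.1^2 + p.2^2 < 1}) hms
    rwa [hpre] at this
  have := (h2.integrable_comp_emb Complex.measurableEquivRealProd.measurableEmbedding).mpr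
    (w2d hs)
  apply this.congr
  apply Filter.Eventually.of_forall
  intro z
  simp only [Function.comp_apply, Complex.measurableEquivRealProd_apply]
  rw [Complex.sq_norm, Complex.normSq_apply]
  norm_num
  ring_nf

lemma bdd_mul_w_int {lam : ℝ} (hlam : 1 < lam) (h : ℂ → ℂ) (C : ℝ)
    (hm : AEStronglyMeasurable h (volume.restrict unitDisc))
    (hb : ∀ z ∈ unitDisc, ‖h z‖ ≤ C) :
    IntegrableOn (fun z => h z * ((1 - ‖z‖^2) ^ (lam - 2) : ℝ)) unitDisc := by
  have hw : IntegrableOn (fun z : ℂ => (1 - ‖z‖^2) ^ (lam - 2)) unitDisc :=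
    w_int (by linarith)
  apply Integrable.mono' (hw.const_mul C)
  · apply hm.mul
    apply Measurable.aestronglyMeasurable
    fun_prop
  · filter_upwards [ae_restrict_mem unitDisc_meas] with z hz
    rw [norm_mul]
    have h1 : (0:ℝ) ≤ 1 - ‖z‖^2 := by
      have : ‖z‖ < 1 := hz
      nlinarith [norm_nonneg z]
    have hww : (0:ℝ) ≤ (1 - ‖z‖^2) ^ (lam - 2) := Real.rpow_nonneg h1 _
    rw [Complex.norm_real, Real.norm_eq_abs, _root_.abs_of_nonneg hww]
    exact mul_le_mul_of_nonneg_right (hb z hz) hww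

lemma moment_rotate (lam θ : ℝ) (h : ℂ → ℂ) (j k : ℕ) :
    (∫ z in unitDisc, h (Complex.exp (θ * Complex.I) * z) * z ^ j * (starRingEnd ℂ) z ^ k *
        ((1 - ‖z‖ ^ 2) ^ (lam - 2) : ℝ))
      = Complex.exp (((k:ℂ) - (j:ℂ)) * θ * Complex.I) *
        ∫ z in unitDisc, h z * z ^ j * (starRingEnd ℂ) z ^ k *
          ((1 - ‖z‖ ^ 2) ^ (lam - 2) : ℝ) := by
  set F : ℂ → ℂ := fun z => h (Complex.exp (θ * Complex.I) * z) * z ^ j *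
    (starRingEnd ℂ) z ^ k * ((1 - ‖z‖ ^ 2) ^ (lam - 2) : ℝ) with hF
  have hrot := rot_integral (-θ) F
  have hkey : ∀ z : ℂ, F (Complex.exp ((-θ:ℝ) * Complex.I) * z)
      = Complex.exp (((k:ℂ) - (j:ℂ)) * θ * Complex.I) *
        (h z * z ^ j * (starRingEnd ℂ) z ^ k * ((1 - ‖z‖ ^ 2) ^ (lam - 2) : ℝ)) := by
    intro z
    have hnorm : ‖Complex.exp ((-θ:ℝ) * Complex.I) * z‖ = ‖z‖ := by
      rw [norm_mul, Complex.norm_exp_ofReal_mul_I,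
        one_mul]
    have hcomp : Complex.exp (θ * Complex.I) * (Complex.exp ((-θ:ℝ) * Complex.I) * z) = z := by
      rw [← mul_assoc, ← Complex.exp_add]
      push_cast
      ring_nf
      simp
    rw [hF]
    simp only [hnorm, hcomp]
    have hconj : (starRingEnd ℂ) (Complex.exp ((-θ:ℝ) * Complex.I)) =
        Complex.exp ((θ:ℂ) * Complex.I) := by
      rw [← Complex.exp_conj]
      congr 1
      rw [map_mul, Complex.conj_ofReal, Complex.conj_I]
      push_cast
      ring
    rw [mul_pow, map_mul, mul_pow, hconj]
    have hexp : Complex.exp ((-θ:ℝ) * Complex.I) ^ j * Complex.exp ((θ:ℂ) * Complex.I) ^ k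
        = Complex.exp (((k:ℂ) - (j:ℂ)) * θ * Complex.I) := by
      rw [← Complex.exp_nat_mul, ← Complex.exp_nat_mul, ← Complex.exp_add]
      congr 1
      push_cast
      ring
    calc h z * (Complex.exp ((-θ:ℝ) * Complex.I) ^ j * z ^ j) *
          (Complex.exp ((θ:ℂ) * Complex.I) ^ k * (starRingEnd ℂ) z ^ k) *
          (((1 - ‖z‖ ^ 2) ^ (lam - 2) : ℝ) : ℂ)
        = (Complex.exp ((-θ:ℝ) * Complex.I) ^ j * Complex.exp ((θ:ℂ) * Complex.I) ^ k) *
          (h z * z ^ j * (starRingEnd ℂ) z ^ k * (((1 - ‖z‖ ^ 2) ^ (lam - 2) : ℝ) : ℂ)) := by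
          ring
      _ = _ := by rw [hexp]
  rw [← hrot]
  rw [integral_congr_ae (Filter.Eventually.of_forall hkey)]
  rw [integral_const_mul]
lemma moments_zero (G : ℂ → ℂ) (hGm : Measurable G) (hGi : IntegrableOn G unitDisc)
    (hmom : ∀ j k : ℕ, ∫ z in unitDisc, z ^ j * (starRingEnd ℂ) z ^ k * G z = 0) :
    ∀ᵐ z ∂(volume.restrict unitDisc), G z = 0 := by
  set K : Set ℂ := Metric.closedBall 0 1 with hK
  have hKc : IsCompact K := isCompact_closedBall 0 1
  haveI : CompactSpace K := isCompact_iff_compactSpace.mp hKc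
  have hKm : MeasurableSet K := measurableSet_closedBall
  have hDK : unitDisc ⊆ K := by rw [unitDisc_eq]; exact Metric.ball_subset_closedBall
  have hemb : MeasurableEmbedding (Subtype.val : K → ℂ) :=
    MeasurableEmbedding.subtype_coe hKm
  set ext : C(K, ℂ) → ℂ → ℂ := fun f => Function.extend Subtype.val f (fun _ => 0) with hext
  have hext_mem : ∀ (f : C(K,ℂ)) (z : ℂ) (hz : z ∈ K), ext f z = f ⟨z, hz⟩ := by
    intro f z hz
    have := Subtype.val_injective.extend_apply (f : K → ℂ) (fun _ => (0:ℂ)) ⟨z, hz⟩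
    simpa [hext] using this
  have hext_not : ∀ (f : C(K,ℂ)) (z : ℂ), z ∉ K → ext f z = 0 := by
    intro f z hz
    exact Function.extend_apply' _ _ _ (by rintro ⟨a, rfl⟩; exact hz a.2)
  have hext_meas : ∀ f : C(K,ℂ), Measurable (ext f) :=
    fun f => hemb.measurable_extend f.continuous.measurable measurable_const
  have hext_bd : ∀ (f : C(K,ℂ)) (z : ℂ), ‖ext f z‖ ≤ ‖f‖ := by
    intro f z
    by_cases hz : z ∈ K
    · rw [hext_mem f z hz]; exact f.norm_coe_le_norm _
    · rw [hext_not f z hz]; simp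
  have hext_sub : ∀ (f g : C(K,ℂ)) (z : ℂ), ext (f - g) z = ext f z - ext g z := by
    intro f g z
    by_cases hz : z ∈ K
    · rw [hext_mem _ z hz, hext_mem _ z hz, hext_mem _ z hz]; simp
    · rw [hext_not _ z hz, hext_not _ z hz, hext_not _ z hz]; simp
  have hext_add : ∀ (f g : C(K,ℂ)) (z : ℂ), ext (f + g) z = ext f z + ext g z := by
    intro f g z
    by_cases hz : z ∈ K
    · rw [hext_mem _ z hz, hext_mem _ z hz, hext_mem _ z hz]; simp
    · rw [hext_not _ z hz, hext_not _ z hz, hext_not _ z hz]; simp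
  have hext_smul : ∀ (c : ℂ) (f : C(K,ℂ)) (z : ℂ), ext (c • f) z = c * ext f z := by
    intro c f z
    by_cases hz : z ∈ K
    · rw [hext_mem _ z hz, hext_mem _ z hz]; simp
    · rw [hext_not _ z hz, hext_not _ z hz]; simp
  have hint : ∀ f : C(K,ℂ), IntegrableOn (fun z => ext f z * G z) unitDisc := by
    intro f
    apply Integrable.mono' (hGi.norm.const_mul ‖f‖)
    · exact ((hext_meas f).mul hGm).aestronglyMeasurable.restrict
    · filter_upwards with z
      rw [norm_mul]
      exact mul_le_mul_of_nonneg_right (hext_bd f z) (norm_nonneg _)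
  set L : C(K,ℂ) → ℂ := fun f => ∫ z in unitDisc, ext f z * G z with hL
  have hlip : LipschitzWith ⟨∫ z in unitDisc, ‖G z‖,
      integral_nonneg fun z => norm_nonneg _⟩ L := by
    apply LipschitzWith.of_dist_le_mul
    intro f g
    rw [dist_eq_norm, dist_eq_norm, hL]
    have heq : (∫ z in unitDisc, ext f z * G z) - ∫ z in unitDisc, ext g z * G z
        = ∫ z in unitDisc, ext (f - g) z * G z := by
      rw [← integral_sub (hint f) (hint g)]
      apply integral_congr_ae
      filter_upwards with z
      rw [hext_sub]; ring
    rw [heq]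
    calc ‖∫ z in unitDisc, ext (f - g) z * G z‖
        ≤ ∫ z in unitDisc, ‖f - g‖ * ‖G z‖ := by
          apply norm_integral_le_of_norm_le (hGi.norm.const_mul _)
          filter_upwards with z
          rw [norm_mul]
          exact mul_le_mul_of_nonneg_right (hext_bd _ z) (norm_nonneg _)
      _ = ‖f - g‖ * ∫ z in unitDisc, ‖G z‖ := (integral_const_mul _ _)
      _ = (⟨∫ z in unitDisc, ‖G z‖, integral_nonneg fun z => norm_nonneg _⟩ : NNReal)
            * ‖f - g‖ := by rw [mul_comm]
  have hLcont : Continuous L := hlip.continuous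
  set X : C(K,ℂ) := ContinuousMap.restrict K (ContinuousMap.id ℂ) with hX
  have hmono : ∀ j k : ℕ, L (X^j * (star X)^k) = 0 := by
    intro j k
    rw [hL, ← hmom j k]
    apply setIntegral_congr_fun unitDisc_meas
    intro z hz
    show ext (X ^ j * star X ^ k) z * G z = z ^ j * (starRingEnd ℂ) z ^ k * G z
    rw [hext_mem _ z (hDK hz)]
    simp [hX]
  set S : Set C(K,ℂ) := {f | ∃ j k : ℕ, f = X^j * (star X)^k} with hS
  set M : Submodule ℂ C(K,ℂ) := Submodule.span ℂ S with hM
  have hL_zero : ∀ f ∈ M, L f = 0 := by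
    intro f hf
    induction hf using Submodule.span_induction with
    | mem g hg => obtain ⟨j, k, rfl⟩ := hg; exact hmono j k
    | zero =>
      show (∫ z in unitDisc, ext 0 z * G z) = 0
      have : ∀ z, ext (0 : C(K,ℂ)) z * G z = 0 := by
        intro z
        by_cases hz : z ∈ K
        · rw [hext_mem _ z hz]; simp
        · rw [hext_not _ z hz]; simp
      simp only [this, integral_zero]
    | add x y hx hy hx0 hy0 =>
      show (∫ z in unitDisc, ext (x + y) z * G z) = 0
      have : (∫ z in unitDisc, ext (x + y) z * G z)
          = (∫ z in unitDisc, ext x z * G z) + ∫ z in unitDisc, ext y z * G z := by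
        rw [← integral_add (hint x) (hint y)]
        apply integral_congr_ae
        filter_upwards with z
        rw [hext_add]; ring
      rw [this]
      rw [show (∫ z in unitDisc, ext x z * G z) = L x from rfl,
        show (∫ z in unitDisc, ext y z * G z) = L y from rfl, hx0, hy0, add_zero]
    | smul c x hx hx0 =>
      show (∫ z in unitDisc, ext (c • x) z * G z) = 0
      have : (∫ z in unitDisc, ext (c • x) z * G z)
          = c * ∫ z in unitDisc, ext x z * G z := by
        rw [← integral_const_mul]
        apply integral_congr_ae
        filter_upwards with z
        rw [hext_smul]; ring
      rw [this, show (∫ z in unitDisc, ext x z * G z) = L x from rfl, hx0, mul_zero]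
  have hMmul : ∀ f g : C(K,ℂ), f ∈ M → g ∈ M → f * g ∈ M := by
    have hle : M * M ≤ M := by
      rw [hM, Submodule.span_mul_span]
      apply Submodule.span_le.mpr
      rintro x hx
      obtain ⟨a, ha, b, hb, rfl⟩ := hx
      obtain ⟨j, k, rfl⟩ := ha
      obtain ⟨j', k', rfl⟩ := hb
      exact Submodule.subset_span ⟨j + j', k + k', by rw [pow_add, pow_add]; ring⟩
    exact fun f g hf hg => hle (Submodule.mul_mem_mul hf hg)
  have h1M : (1 : C(K,ℂ)) ∈ M := Submodule.subset_span ⟨0, 0, by simp⟩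
  have hXM : X ∈ M := Submodule.subset_span ⟨1, 0, by simp⟩
  have hMstar : ∀ f ∈ M, star f ∈ M := by
    intro f hf
    induction hf using Submodule.span_induction with
    | mem g hg =>
      obtain ⟨j, k, rfl⟩ := hg
      refine Submodule.subset_span ⟨k, j, ?_⟩
      rw [star_mul', star_pow, star_pow, star_star]
      ring
    | zero => rw [star_zero]; exact M.zero_mem
    | add x y hx hy hx0 hy0 => rw [star_add]; exact M.add_mem hx0 hy0
    | smul c x hx hx0 => rw [star_smul]; exact M.smul_mem _ hx0
  have hsc : ∀ f ∈ (polynomialFunctions K).starClosure, f ∈ M := by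
    intro f hf
    rw [polynomialFunctions.starClosure_eq_adjoin_X] at hf
    induction hf using StarAlgebra.adjoin_induction with
    | mem g hg =>
      rw [Set.mem_singleton_iff] at hg
      subst hg
      simpa only [Polynomial.toContinuousMapOnAlgHom_apply,
        Polynomial.toContinuousMapOn_X_eq_restrict_id] using hXM
    | algebraMap c =>
      rw [Algebra.algebraMap_eq_smul_one]
      exact M.smul_mem _ h1M
    | add x y hx hy hx0 hy0 => exact M.add_mem hx0 hy0
    | mul x y hx hy hx0 hy0 => exact hMmul _ _ hx0 hy0
    | star x hx hx0 => exact hMstar _ hx0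
  have hLzero : ∀ f : C(K,ℂ), L f = 0 := by
    intro f
    have h1 : f ∈ (polynomialFunctions K).starClosure.topologicalClosure := by
      rw [polynomialFunctions.starClosure_topologicalClosure]; trivial
    have h2 : f ∈ closure ((polynomialFunctions K).starClosure : Set C(K,ℂ)) := by
      rwa [← SetLike.mem_coe, StarSubalgebra.topologicalClosure_coe] at h1
    have h3 : f ∈ closure (M : Set C(K,ℂ)) :=
      closure_mono (fun g hg => hsc g hg) h2
    have hclosed : IsClosed {f : C(K,ℂ) | L f = 0} :=
      isClosed_eq hLcont continuous_const
    exact closure_minimal (fun g hg => hL_zero g hg) hclosed h3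
  -- test functions
  have hFi : Integrable (unitDisc.indicator G) := hGi.integrable_indicator unitDisc_meas
  have hae : ∀ᵐ z ∂volume, unitDisc.indicator G z = 0 := by
    apply ae_eq_zero_of_integral_contDiff_smul_eq_zero hFi.locallyIntegrable
    intro φ hφ hφc
    have hcont : Continuous fun z : ℂ => (φ z : ℂ) :=
      Complex.continuous_ofReal.comp hφ.continuous
    set fφ : C(K,ℂ) := ⟨fun x => (φ (x:ℂ) : ℂ), hcont.comp continuous_subtype_val⟩ with hfφ
    have h0 := hLzero fφ
    rw [hL] at h0
    have heq : ∫ x, φ x • unitDisc.indicator G x = ∫ z in unitDisc, ext fφ z * G z := by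
      rw [← integral_indicator unitDisc_meas]
      apply integral_congr_ae
      filter_upwards with z
      by_cases hz : z ∈ unitDisc
      · rw [Set.indicator_of_mem hz, Set.indicator_of_mem hz, hext_mem _ z (hDK hz)]
        simp [hfφ, Complex.real_smul]
      · rw [Set.indicator_of_notMem hz, Set.indicator_of_notMem hz, smul_zero]
    rw [heq]; exact h0
  have h1 := ae_restrict_of_ae (s := unitDisc) hae
  filter_upwards [h1, ae_restrict_mem unitDisc_meas] with z hz hmem
  rwa [Set.indicator_of_mem hmem] at hz
/-- **Radiality of the symbol is equivalent to vanishing of the off-diagonal Toeplitz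
coefficients (unit disc).** For `λ > 1` and a bounded measurable `ψ : 𝔻 → ℂ`, `ψ` is
radial (for every `θ ∈ ℝ`, `ψ(e^{iθ} z) = ψ(z)` for a.e. `z ∈ 𝔻`) if and only if
`∫_𝔻 ψ(z) z^j (conj z)^k (1-|z|²)^{λ-2} dA(z) = 0` for all `j ≠ k` in `ℕ`. -/
theorem unitDisc_radial_iff_offdiagonal_vanish (lam : ℝ) (hlam : 1 < lam)
    (ψ : ℂ → ℂ) (hmeas : Measurable ψ) (hbd : ∃ C : ℝ, ∀ z, ‖ψ z‖ ≤ C) :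
    (∀ θ : ℝ, ∀ᵐ z ∂(volume.restrict unitDisc),
        ψ (Complex.exp (θ * Complex.I) * z) = ψ z) ↔
      (∀ j k : ℕ, j ≠ k →
        ∫ z in unitDisc, ψ z * z ^ j * (starRingEnd ℂ) z ^ k *
          ((1 - ‖z‖ ^ 2) ^ (lam - 2) : ℝ) = 0) := by
  obtain ⟨C, hC⟩ := hbd
  constructor
  · -- radial → off-diagonal vanish
    intro hrad j k hjk
    set A : ℂ := ∫ z in unitDisc, ψ z * z ^ j * (starRingEnd ℂ) z ^ k *
      ((1 - ‖z‖ ^ 2) ^ (lam - 2) : ℝ) with hA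
    have hne : ((k:ℝ) - (j:ℝ)) ≠ 0 := by
      intro hcon
      apply hjk
      have : (j:ℝ) = (k:ℝ) := by linarith
      exact_mod_cast this
    set θ0 : ℝ := Real.pi / ((k:ℝ) - (j:ℝ)) with hθ0
    have h1 : (∫ z in unitDisc, ψ (Complex.exp (θ0 * Complex.I) * z) * z ^ j *
        (starRingEnd ℂ) z ^ k * ((1 - ‖z‖ ^ 2) ^ (lam - 2) : ℝ)) = A := by
      rw [hA]
      apply integral_congr_ae
      filter_upwards [hrad θ0] with z hz
      rw [hz]
    have h2 := moment_rotate lam θ0 ψ j k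
    rw [h1] at h2
    have harg : ((k:ℂ) - (j:ℂ)) * (θ0:ℂ) * Complex.I = (Real.pi:ℂ) * Complex.I := by
      have hre : ((k:ℝ) - (j:ℝ)) * θ0 = Real.pi := by
        rw [hθ0]; field_simp
      calc ((k:ℂ) - (j:ℂ)) * (θ0:ℂ) * Complex.I
          = ((((k:ℝ) - (j:ℝ)) * θ0 : ℝ) : ℂ) * Complex.I := by push_cast; ring
        _ = (Real.pi:ℂ) * Complex.I := by rw [hre]
    rw [harg, Complex.exp_pi_mul_I] at h2
    have h3 : (2:ℂ) * A = 0 := by linear_combination h2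
    have h4 : A = 0 := by
      rcases mul_eq_zero.mp h3 with h | h
      · norm_num at h
      · exact h
    exact h4
  · -- off-diagonal vanish → radial
    intro hvan θ
    set G : ℂ → ℂ := fun z => (ψ (Complex.exp (θ * Complex.I) * z) - ψ z) *
      ((1 - ‖z‖ ^ 2) ^ (lam - 2) : ℝ) with hG
    have hGm : Measurable G := by
      apply Measurable.mul
      · exact (hmeas.comp (measurable_const_mul _)).sub hmeas
      · fun_prop
    have hGi : IntegrableOn G unitDisc := by
      apply bdd_mul_w_int hlam _ (C + C)
      · exact ((hmeas.comp (measurable_const_mul _)).sub hmeas).aestronglyMeasurable.restrict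
      · intro z _
        calc ‖ψ (Complex.exp (θ * Complex.I) * z) - ψ z‖
            ≤ ‖ψ (Complex.exp (θ * Complex.I) * z)‖ + ‖ψ z‖ := norm_sub_le _ _
          _ ≤ C + C := add_le_add (hC _) (hC _)
    have hmom : ∀ j k : ℕ, ∫ z in unitDisc, z ^ j * (starRingEnd ℂ) z ^ k * G z = 0 := by
      intro j k
      have hbound : ∀ (g : ℂ → ℂ), (∀ z, ‖g z‖ ≤ C) → ∀ z ∈ unitDisc,
          ‖g z * z ^ j * (starRingEnd ℂ) z ^ k‖ ≤ C := by
        intro g hg z hz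
        have hz1 : ‖z‖ ≤ 1 := le_of_lt hz
        rw [norm_mul, norm_mul]
        calc ‖g z‖ * ‖z ^ j‖ * ‖(starRingEnd ℂ) z ^ k‖
            ≤ C * 1 * 1 := by
              apply mul_le_mul ?_ ?_ (norm_nonneg _) ?_
              · apply mul_le_mul (hg z) ?_ (norm_nonneg _) ?_
                · rw [norm_pow]; exact pow_le_one₀ (norm_nonneg z) hz1
                · exact le_trans (norm_nonneg _) (hg z)
              · rw [norm_pow, RingHomIsometric.norm_map]
                exact pow_le_one₀ (norm_nonneg z) hz1
              · have h0 : (0:ℝ) ≤ C := le_trans (norm_nonneg (ψ 0)) (hC 0)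
                nlinarith
          _ = C := by ring
      have hint1 : IntegrableOn (fun z => ψ (Complex.exp (θ * Complex.I) * z) * z ^ j *
          (starRingEnd ℂ) z ^ k * ((1 - ‖z‖ ^ 2) ^ (lam - 2) : ℝ)) unitDisc := by
        apply bdd_mul_w_int hlam (fun z => ψ (Complex.exp (θ * Complex.I) * z) * z ^ j *
          (starRingEnd ℂ) z ^ k) C
        · apply Measurable.aestronglyMeasurable
          exact ((hmeas.comp (measurable_const_mul _)).mul (measurable_id.pow_const j)).mul
            (Complex.continuous_conj.measurable.pow_const k)
        · exact hbound _ (fun z => hC _)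
      have hint2 : IntegrableOn (fun z => ψ z * z ^ j *
          (starRingEnd ℂ) z ^ k * ((1 - ‖z‖ ^ 2) ^ (lam - 2) : ℝ)) unitDisc := by
        apply bdd_mul_w_int hlam (fun z => ψ z * z ^ j * (starRingEnd ℂ) z ^ k) C
        · apply Measurable.aestronglyMeasurable
          exact (hmeas.mul (measurable_id.pow_const j)).mul
            (Complex.continuous_conj.measurable.pow_const k)
        · exact hbound _ (fun z => hC _)
      have hsplit : (∫ z in unitDisc, z ^ j * (starRingEnd ℂ) z ^ k * G z)
          = (∫ z in unitDisc, ψ (Complex.exp (θ * Complex.I) * z) * z ^ j *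
              (starRingEnd ℂ) z ^ k * ((1 - ‖z‖ ^ 2) ^ (lam - 2) : ℝ))
            - ∫ z in unitDisc, ψ z * z ^ j * (starRingEnd ℂ) z ^ k *
              ((1 - ‖z‖ ^ 2) ^ (lam - 2) : ℝ) := by
        rw [← integral_sub hint1 hint2]
        apply integral_congr_ae
        filter_upwards with z
        rw [hG]
        ring
      rw [hsplit, moment_rotate lam θ ψ j k]
      rcases eq_or_ne j k with heq | hne
      · subst heq
        simp
      · rw [hvan j k hne]
        ring
    have hzero := moments_zero G hGm hGi hmom
    filter_upwards [hzero, ae_restrict_mem unitDisc_meas] with z hz hmem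
    have hwpos : (0:ℝ) < (1 - ‖z‖ ^ 2) ^ (lam - 2) := by
      apply Real.rpow_pos_of_pos
      have : ‖z‖ < 1 := hmem
      nlinarith [norm_nonneg z]
    have hwne : (((1 - ‖z‖ ^ 2) ^ (lam - 2) : ℝ) : ℂ) ≠ 0 := by
      simp only [ne_eq, Complex.ofReal_eq_zero]
      exact ne_of_gt hwpos
    rw [hG] at hz
    have := mul_eq_zero.mp hz
    rcases this with h | h
    · exact sub_eq_zero.mp h
    · exact absurd h hwne
end

section
/- Let λ > 1 be real, let μ_λ be the measure (1−|z|²)^{λ−2} dA(z) on the unit disc 𝔻, let H_λ be the closure in L²(μ_λ) of the span of the monomials z^k (k ∈ ℕ), and let P_λ : L²(μ_λ) → H_λ be the orthogonal projection. For bounded measurable ψ : 𝔻 → ℂ define the Toeplitz operator T_ψ : H_λ → H_λ by T_ψ f = P_λ(ψ f). If ψ and φ are both bounded, measurable and radial (ψ(e^{iθ}z) = ψ(z) a.e. for every θ, and likewise for φ), then T_ψ ∘ T_φ = T_φ ∘ T_ψ. -/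
open MeasureTheory
open Complex

/-- The weighted measure `μ_λ = (1-|z|²)^{λ-2} dA(z)` on the unit disc. -/
noncomputable def discBergMeasure (lam : ℝ) : Measure ℂ :=
  (volume.restrict unitDisc).withDensity
    fun z => ENNReal.ofReal ((1 - ‖z‖ ^ 2) ^ (lam - 2))

/-- The weighted Bergman space `H_λ`: the closure in `L²(μ_λ)` of the span of the
monomials `z^k`, `k ∈ ℕ`. -/
noncomputable def discBergSpace (lam : ℝ) : Submodule ℂ (Lp ℂ 2 (discBergMeasure lam)) :=
  (Submodule.span ℂ
    {f : Lp ℂ 2 (discBergMeasure lam) |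
      ∃ k : ℕ, ⇑f =ᵐ[discBergMeasure lam] fun z => z ^ k}).topologicalClosure

namespace DiscToeplitzAux

lemma isOpen_unitDisc : IsOpen unitDisc := isOpen_lt continuous_norm continuous_const

lemma measurableSet_unitDisc : MeasurableSet unitDisc := isOpen_unitDisc.measurableSet

noncomputable def w (lam : ℝ) (z : ℂ) : ENNReal := ENNReal.ofReal ((1 - ‖z‖ ^ 2) ^ (lam - 2))

lemma w_meas (lam : ℝ) : Measurable (w lam) := by
  apply Measurable.ennreal_ofReal
  fun_prop

lemma discBergMeasure_def (lam : ℝ) :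
    discBergMeasure lam = (volume.restrict unitDisc).withDensity (w lam) := rfl

lemma rot_mp (lam : ℝ) {u : ℂ} (hu : ‖u‖ = 1) :
    MeasurePreserving (fun z => u * z) (discBergMeasure lam) (discBergMeasure lam) := by
  have hu0 : u ≠ 0 := by
    intro h; rw [h] at hu; simp at hu
  have hm : Measurable fun z : ℂ => u * z := measurable_id.const_mul u
  have hemb : MeasurableEmbedding fun z : ℂ => u * z := by
    have := (Homeomorph.mulLeft₀ u hu0).measurableEmbedding
    simpa using this
  have hvol : MeasurePreserving (fun z : ℂ => u * z) volume volume := by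
    have h := LinearIsometryEquiv.measurePreserving
      (rotation (⟨u, mem_sphere_zero_iff_norm.2 hu⟩ : Circle))
    have : ⇑(rotation (⟨u, mem_sphere_zero_iff_norm.2 hu⟩ : Circle)) = fun z : ℂ => u * z := by
      funext z; exact rotation_apply _ _
    rwa [this] at h
  have hu' : ‖u‖ = 1 := hu
  have hpre : (fun z : ℂ => u * z) ⁻¹' unitDisc = unitDisc := by
    ext z; simp [unitDisc, map_mul, hu']
  have hres : MeasurePreserving (fun z : ℂ => u * z)
      (volume.restrict unitDisc) (volume.restrict unitDisc) := by
    refine ⟨hm, ?_⟩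
    rw [← hpre, ← Measure.restrict_map hm measurableSet_unitDisc, hvol.map_eq, hpre]
  have hwd : ∀ z, w lam (u * z) = w lam z := by
    intro z; simp [w, norm_mul, hu]
  refine ⟨hm, ?_⟩
  rw [discBergMeasure_def]
  ext s hs
  rw [Measure.map_apply hm hs, withDensity_apply _ (hm hs), withDensity_apply _ hs]
  calc ∫⁻ z in (fun z : ℂ => u * z) ⁻¹' s, w lam z ∂(volume.restrict unitDisc)
      = ∫⁻ z in (fun z : ℂ => u * z) ⁻¹' s, w lam (u * z) ∂(volume.restrict unitDisc) := by
        apply lintegral_congr; intro z; rw [hwd]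
    _ = ∫⁻ z in s, w lam z ∂(volume.restrict unitDisc) :=
        hres.setLIntegral_comp_preimage_emb hemb _ _

lemma integral_rot (lam : ℝ) {u : ℂ} (hu : ‖u‖ = 1) (F : ℂ → ℂ) :
    ∫ z, F (u * z) ∂discBergMeasure lam = ∫ z, F z ∂discBergMeasure lam := by
  have hu0 : u ≠ 0 := by
    intro h; rw [h] at hu; simp at hu
  have hemb : MeasurableEmbedding fun z : ℂ => u * z := by
    have := (Homeomorph.mulLeft₀ u hu0).measurableEmbedding
    simpa using this
  exact (rot_mp lam hu).integral_comp hemb F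

lemma ae_mem_disc (lam : ℝ) : ∀ᵐ z ∂discBergMeasure lam, z ∈ unitDisc := by
  have h1 : ∀ᵐ z ∂(volume.restrict unitDisc), z ∈ unitDisc :=
    ae_restrict_mem measurableSet_unitDisc
  exact (withDensity_absolutelyContinuous _ _).ae_le h1

/-- Key orthogonality: a radial symbol times `z^j \bar z^k`, `j ≠ k`, integrates to zero. -/
lemma radial_orth (lam : ℝ) (χ : ℂ → ℂ)
    (hrad : ∀ θ : ℝ, ∀ᵐ z ∂(volume.restrict unitDisc),
      χ (Complex.exp (θ * Complex.I) * z) = χ z)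
    {j k : ℕ} (hjk : j ≠ k) :
    ∫ z, χ z * (z ^ j * (starRingEnd ℂ) z ^ k) ∂discBergMeasure lam = 0 := by
  set μ := discBergMeasure lam
  have hjk' : (j : ℝ) - k ≠ 0 := sub_ne_zero.2 (by exact_mod_cast hjk)
  set θ : ℝ := Real.pi / ((j : ℝ) - k) with hθ
  set u : ℂ := Complex.exp (θ * Complex.I) with hudef
  have hu : ‖u‖ = 1 := by
    rw [hudef, Complex.norm_exp_ofReal_mul_I]
  have hrot : u ^ j * (starRingEnd ℂ) u ^ k = -1 := by
    have hconj : (starRingEnd ℂ) u = Complex.exp (-(θ * Complex.I)) := by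
      rw [hudef, ← Complex.exp_conj]
      congr 1
      simp [Complex.conj_I]
    rw [hudef, hconj, ← Complex.exp_nat_mul, ← Complex.exp_nat_mul, ← Complex.exp_add]
    have harg : (j : ℂ) * (θ * Complex.I) + (k : ℂ) * -(θ * Complex.I)
        = (Real.pi : ℂ) * Complex.I := by
      have : ((j : ℂ) - k) * θ = Real.pi := by
        have : (((j : ℝ) - k) * θ : ℝ) = Real.pi := by
          rw [hθ]; field_simp
        calc ((j : ℂ) - k) * θ = ((((j:ℝ) - k) * θ : ℝ) : ℂ) := by push_cast; ring
          _ = (Real.pi : ℂ) := by rw [this]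
      calc (j : ℂ) * (θ * Complex.I) + (k : ℂ) * -(θ * Complex.I)
          = ((j : ℂ) - k) * θ * Complex.I := by ring
        _ = (Real.pi : ℂ) * Complex.I := by rw [this]
    rw [harg, Complex.exp_pi_mul_I]
  have hradμ : ∀ᵐ z ∂μ, χ (u * z) = χ z :=
    (withDensity_absolutelyContinuous _ _).ae_le (hrad θ)
  have key : ∫ z, χ (u * z) * ((u * z) ^ j * (starRingEnd ℂ) (u * z) ^ k) ∂μ
      = ∫ z, χ z * (z ^ j * (starRingEnd ℂ) z ^ k) ∂μ :=
    integral_rot lam hu (fun z => χ z * (z ^ j * (starRingEnd ℂ) z ^ k))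
  have e1 : ∫ z, χ (u * z) * ((u * z) ^ j * (starRingEnd ℂ) (u * z) ^ k) ∂μ
      = ∫ z, χ z * ((u * z) ^ j * (starRingEnd ℂ) (u * z) ^ k) ∂μ := by
    apply integral_congr_ae
    filter_upwards [hradμ] with z hz
    rw [hz]
  have e2 : ∫ z, χ z * ((u * z) ^ j * (starRingEnd ℂ) (u * z) ^ k) ∂μ
      = (u ^ j * (starRingEnd ℂ) u ^ k)
        * ∫ z, χ z * (z ^ j * (starRingEnd ℂ) z ^ k) ∂μ := by
    rw [← MeasureTheory.integral_const_mul]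
    apply integral_congr_ae
    filter_upwards with z
    rw [map_mul]
    ring
  have hfin : ∫ z, χ z * (z ^ j * (starRingEnd ℂ) z ^ k) ∂μ
      = -∫ z, χ z * (z ^ j * (starRingEnd ℂ) z ^ k) ∂μ :=
    calc ∫ z, χ z * (z ^ j * (starRingEnd ℂ) z ^ k) ∂μ
        = ∫ z, χ (u * z) * ((u * z) ^ j * (starRingEnd ℂ) (u * z) ^ k) ∂μ := key.symm
      _ = ∫ z, χ z * ((u * z) ^ j * (starRingEnd ℂ) (u * z) ^ k) ∂μ := e1
      _ = u ^ j * (starRingEnd ℂ) u ^ k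
            * ∫ z, χ z * (z ^ j * (starRingEnd ℂ) z ^ k) ∂μ := e2
      _ = -∫ z, χ z * (z ^ j * (starRingEnd ℂ) z ^ k) ∂μ := by rw [hrot]; ring
  linear_combination hfin / 2


lemma lintegral_norm_complex (g : ℝ → ENNReal) (hg : Measurable g) :
    ∫⁻ z : ℂ, g ‖z‖ ∂volume
      = (volume : Measure ℂ).toSphere Set.univ
        * ∫⁻ r in Set.Ioi (0 : ℝ), ENNReal.ofReal r * g r := by
  have h1 : ∫⁻ z : ℂ, g ‖z‖ ∂volume = ∫⁻ z in ({0}ᶜ : Set ℂ), g ‖z‖ ∂volume := by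
    rw [restrict_compl_singleton]
  have h2 : ∫⁻ x : (({0}ᶜ : Set ℂ)), g ‖(x : ℂ)‖ ∂(Measure.comap Subtype.val volume)
      = ∫⁻ z in ({0}ᶜ : Set ℂ), g ‖z‖ ∂volume := by
    have h := setLIntegral_subtype (μ := (volume : Measure ℂ))
      (measurableSet_singleton (0 : ℂ)).compl Set.univ (fun z => g ‖z‖)
    rw [Measure.restrict_univ, Set.image_univ, Subtype.range_coe] at h
    exact h
  have h3 := (Measure.measurePreserving_homeomorphUnitSphereProd
      (volume : Measure ℂ)).lintegral_comp
      (f := fun p : (Metric.sphere (0:ℂ) 1) × (Set.Ioi (0:ℝ)) => g (p.2 : ℝ))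
      (hg.comp (measurable_subtype_coe.comp measurable_snd))
  have h4 : ∫⁻ x : (({0}ᶜ : Set ℂ)), g ‖(x : ℂ)‖ ∂(Measure.comap Subtype.val volume)
      = ∫⁻ p : (Metric.sphere (0:ℂ) 1) × (Set.Ioi (0:ℝ)), g (p.2 : ℝ)
          ∂((volume : Measure ℂ).toSphere.prod
            (Measure.volumeIoiPow (Module.finrank ℝ ℂ - 1))) := by
      rw [← h3]; simp
  have h5 : ∫⁻ p : (Metric.sphere (0:ℂ) 1) × (Set.Ioi (0:ℝ)), g (p.2 : ℝ)
          ∂((volume : Measure ℂ).toSphere.prod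
            (Measure.volumeIoiPow (Module.finrank ℝ ℂ - 1)))
      = (volume : Measure ℂ).toSphere Set.univ
        * ∫⁻ y : (Set.Ioi (0:ℝ)), g (y : ℝ)
            ∂(Measure.volumeIoiPow (Module.finrank ℝ ℂ - 1)) := by
    have hmp : Measurable fun p : (Metric.sphere (0:ℂ) 1) × (Set.Ioi (0:ℝ)) => g (p.2 : ℝ) := by
      fun_prop
    rw [lintegral_prod (fun p : (Metric.sphere (0:ℂ) 1) × (Set.Ioi (0:ℝ)) => g (p.2 : ℝ))
      hmp.aemeasurable]
    show (∫⁻ _x : (Metric.sphere (0:ℂ) 1),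
        (∫⁻ y : (Set.Ioi (0:ℝ)), g (y : ℝ)
          ∂(Measure.volumeIoiPow (Module.finrank ℝ ℂ - 1)))
        ∂(volume : Measure ℂ).toSphere) = _
    rw [lintegral_const, mul_comm]
  have h6 : ∫⁻ y : (Set.Ioi (0:ℝ)), g (y : ℝ)
        ∂(Measure.volumeIoiPow (Module.finrank ℝ ℂ - 1))
      = ∫⁻ r in Set.Ioi (0 : ℝ), ENNReal.ofReal r * g r := by
    have hrk : Module.finrank ℝ ℂ - 1 = 1 := by rw [Complex.finrank_real_complex]
    rw [hrk, Measure.volumeIoiPow]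
    have hd : Measurable fun r : (Set.Ioi (0:ℝ)) => ENNReal.ofReal ((r : ℝ) ^ 1) := by
      fun_prop
    have hgy : Measurable fun y : (Set.Ioi (0:ℝ)) => g (y : ℝ) := hg.comp measurable_subtype_coe
    rw [lintegral_withDensity_eq_lintegral_mul _ hd hgy]
    have h7 := setLIntegral_subtype (μ := (volume : Measure ℝ))
      (measurableSet_Ioi (a := (0:ℝ))) Set.univ
      (fun r : ℝ => ENNReal.ofReal (r ^ 1) * g r)
    simp only [Measure.restrict_univ, Set.image_univ, Subtype.range_coe] at h7
    simp only [Pi.mul_apply]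
    rw [h7]
    apply lintegral_congr
    intro y
    rw [pow_one]
  rw [h1, ← h2, h4, h5, h6]

lemma disc_measure_univ_lt_top (lam : ℝ) (hlam : 1 < lam) :
    discBergMeasure lam Set.univ < ⊤ := by
  set s : ℝ := lam - 2 with hs
  have hs1 : (-1 : ℝ) < s := by rw [hs]; linarith
  set g : ℝ → ENNReal :=
    (Set.Iio (1 : ℝ)).indicator (fun r => ENNReal.ofReal ((1 - r ^ 2) ^ s)) with hgdef
  have hgmeas : Measurable g := by
    apply Measurable.indicator _ measurableSet_Iio
    exact Measurable.ennreal_ofReal (by fun_prop)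
  have h1 : discBergMeasure lam Set.univ = ∫⁻ z : ℂ, g ‖z‖ ∂volume := by
    rw [discBergMeasure_def, withDensity_apply _ MeasurableSet.univ, Measure.restrict_univ,
      ← lintegral_indicator measurableSet_unitDisc]
    apply lintegral_congr
    intro z
    by_cases hz : z ∈ unitDisc
    · simp only [hgdef]
      rw [Set.indicator_of_mem hz, Set.indicator_of_mem (show ‖z‖ ∈ Set.Iio 1 from hz)]
      rfl
    · simp only [hgdef]
      rw [Set.indicator_of_notMem hz,
        Set.indicator_of_notMem (show ‖z‖ ∉ Set.Iio 1 from hz)]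
  rw [h1, lintegral_norm_complex g hgmeas]
  apply ENNReal.mul_lt_top (measure_lt_top _ _)
  -- bound the radial integral
  set M : ℝ := max 1 ((2 : ℝ) ^ s) with hM
  have hM1 : (1 : ℝ) ≤ M := le_max_left _ _
  have hbound : ∀ r ∈ Set.Ioi (0 : ℝ), ENNReal.ofReal r * g r
      ≤ (Set.Ioo (0:ℝ) 1).indicator (fun r => ENNReal.ofReal (M * (1 - r) ^ s)) r := by
    intro r hr
    have hr0 : (0:ℝ) < r := hr
    rcases lt_or_ge r 1 with hr1 | hr1
    · have hmem : r ∈ Set.Ioo (0:ℝ) 1 := ⟨hr0, hr1⟩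
      rw [hgdef, Set.indicator_of_mem (by exact hr1 : r ∈ Set.Iio 1),
        Set.indicator_of_mem hmem, ← ENNReal.ofReal_mul (le_of_lt hr)]
      apply ENNReal.ofReal_le_ofReal
      have h1r : (0:ℝ) ≤ 1 - r := by linarith
      have h1r' : (0:ℝ) ≤ 1 + r := by linarith
      have hsplit : (1 - r ^ 2) ^ s = (1 - r) ^ s * (1 + r) ^ s := by
        rw [← Real.mul_rpow h1r h1r']
        ring_nf
      rw [hsplit]
      have hfac : (1 + r) ^ s ≤ M := by
        rcases le_or_gt 0 s with hs0 | hs0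
        · exact le_trans (Real.rpow_le_rpow h1r' (by linarith) hs0) (le_max_right _ _)
        · exact le_trans
            (Real.rpow_le_one_of_one_le_of_nonpos (by linarith) (le_of_lt hs0))
            (le_max_left _ _)
      calc r * ((1 - r) ^ s * (1 + r) ^ s)
          ≤ 1 * ((1 - r) ^ s * M) := by
            apply mul_le_mul (le_of_lt hr1) _ _ zero_le_one
            · exact mul_le_mul_of_nonneg_left hfac (Real.rpow_nonneg h1r s)
            · positivity
        _ = M * (1 - r) ^ s := by ring
    · rw [hgdef, Set.indicator_of_notMem (by simpa using hr1 : r ∉ Set.Iio 1),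
        Set.indicator_of_notMem (by simp [Set.mem_Ioo]; intro; linarith)]
      simp
  calc ∫⁻ r in Set.Ioi (0:ℝ), ENNReal.ofReal r * g r
      ≤ ∫⁻ r in Set.Ioi (0:ℝ),
          (Set.Ioo (0:ℝ) 1).indicator (fun r => ENNReal.ofReal (M * (1 - r) ^ s)) r :=
        setLIntegral_mono ((Measurable.ennreal_ofReal (by fun_prop)).indicator
          measurableSet_Ioo) hbound
    _ ≤ ∫⁻ r, (Set.Ioo (0:ℝ) 1).indicator
          (fun r => ENNReal.ofReal (M * (1 - r) ^ s)) r ∂volume :=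
        setLIntegral_le_lintegral _ _
    _ = ∫⁻ r in Set.Ioo (0:ℝ) 1, ENNReal.ofReal (M * (1 - r) ^ s) ∂volume :=
        lintegral_indicator measurableSet_Ioo _
    _ = ∫⁻ x in Set.Ioo (0:ℝ) 1, ENNReal.ofReal (M * x ^ s) ∂volume := by
        have hemb : MeasurableEmbedding (fun t : ℝ => 1 - t) := by
          have h := ((Homeomorph.neg ℝ).trans (Homeomorph.addLeft (1:ℝ))).measurableEmbedding
          have heq : ⇑((Homeomorph.neg ℝ).trans (Homeomorph.addLeft (1:ℝ)))
              = fun t : ℝ => 1 - t := by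
            funext t
            simp [Homeomorph.trans_apply, sub_eq_add_neg]
          rwa [heq] at h
        have hpre : (fun t : ℝ => 1 - t) ⁻¹' (Set.Ioo (0:ℝ) 1) = Set.Ioo (0:ℝ) 1 := by
          ext t
          simp only [Set.mem_preimage, Set.mem_Ioo]
          constructor <;> (rintro ⟨hA, hB⟩; constructor <;> linarith)
        have h := (Measure.measurePreserving_sub_left volume (1:ℝ)).setLIntegral_comp_preimage_emb
          hemb (fun x => ENNReal.ofReal (M * x ^ s)) (Set.Ioo (0:ℝ) 1)
        rw [hpre] at h
        exact h
    _ < ⊤ := by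
        have hint : IntegrableOn (fun x : ℝ => M * x ^ s) (Set.Ioo (0:ℝ) 1) volume := by
          apply Integrable.const_mul
          exact ((intervalIntegrable_iff_integrableOn_Ioc_of_le zero_le_one).1
            (intervalIntegral.intervalIntegrable_rpow' hs1)).mono_set Set.Ioo_subset_Ioc_self
        have hfin := hint.hasFiniteIntegral
        rw [HasFiniteIntegral] at hfin
        refine lt_of_le_of_lt (lintegral_mono fun x => ?_) hfin
        rw [Real.enorm_eq_ofReal_abs]
        exact ENNReal.ofReal_le_ofReal (le_abs_self _)

lemma bergFinite (lam : ℝ) (hlam : 1 < lam) : IsFiniteMeasure (discBergMeasure lam) :=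
  ⟨disc_measure_univ_lt_top lam hlam⟩

/-- A fixed annulus inside the disc, used to show the measure is nonzero. -/
def annulus : Set ℂ := {z : ℂ | 1/4 < ‖z‖ ∧ ‖z‖ < 1/2}

lemma isOpen_annulus : IsOpen annulus :=
  (isOpen_lt continuous_const continuous_norm).inter (isOpen_lt continuous_norm continuous_const)

lemma ann_pos (lam : ℝ) : 0 < discBergMeasure lam annulus := by
  have hAsub : annulus ⊆ unitDisc := by
    intro z hz
    have := hz.2
    simp only [unitDisc, Set.mem_setOf_eq]
    linarith
  set c : ENNReal := ENNReal.ofReal (min ((1/2 : ℝ) ^ (lam - 2)) 1) with hc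
  have hcpos : 0 < c := by
    rw [hc]
    apply ENNReal.ofReal_pos.2
    exact lt_min (Real.rpow_pos_of_pos (by norm_num) _) one_pos
  have hlow : ∀ z ∈ annulus, c ≤ w lam z := by
    intro z hz
    rw [hc, w]
    apply ENNReal.ofReal_le_ofReal
    have hz2 : ‖z‖ ^ 2 < 1/4 := by
      have h := hz.2
      have h0 : (0:ℝ) ≤ ‖z‖ := norm_nonneg z
      nlinarith
    have hx1 : (1/2 : ℝ) ≤ 1 - ‖z‖ ^ 2 := by linarith
    have hx2 : 1 - ‖z‖ ^ 2 ≤ 1 := by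
      have := sq_nonneg ‖z‖
      linarith
    rcases le_or_gt 0 (lam - 2) with hs0 | hs0
    · exact le_trans (min_le_left _ _) (Real.rpow_le_rpow (by norm_num) hx1 hs0)
    · exact le_trans (min_le_right _ _)
        (Real.one_le_rpow_of_pos_of_le_one_of_nonpos (by linarith) hx2 (le_of_lt hs0))
  have hAmeas : MeasurableSet annulus := isOpen_annulus.measurableSet
  have h1 : discBergMeasure lam annulus = ∫⁻ z in annulus, w lam z ∂volume := by
    rw [discBergMeasure_def, withDensity_apply _ hAmeas, Measure.restrict_restrict hAmeas,
      Set.inter_eq_self_of_subset_left hAsub]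
  have h2 : c * volume annulus ≤ discBergMeasure lam annulus := by
    rw [h1, ← setLIntegral_const annulus c]
    exact setLIntegral_mono (w_meas lam) hlow
  have hvolA : 0 < volume annulus := by
    apply isOpen_annulus.measure_pos volume
    refine ⟨((1/3 : ℝ) : ℂ), ?_⟩
    constructor <;> (simp [Complex.norm_real]; norm_num)
  calc (0 : ENNReal) < c * volume annulus := ENNReal.mul_pos (ne_of_gt hcpos) (ne_of_gt hvolA)
    _ ≤ _ := h2

end DiscToeplitzAux


/-- **Toeplitz operators with radial symbols on the disc commute.**
Let `λ > 1`, let `P` be the orthogonal projection of `L²(μ_λ)` onto `H_λ`, and let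
`ψ, φ` be bounded measurable radial symbols. Then `T_ψ ∘ T_φ = T_φ ∘ T_ψ`, i.e.
`P(ψ · P(φ f)) = P(φ · P(ψ f))` for every `f ∈ H_λ`. -/
theorem disc_radial_Toeplitz_commute (lam : ℝ) (hlam : 1 < lam)
    (P : Lp ℂ 2 (discBergMeasure lam) →L[ℂ] Lp ℂ 2 (discBergMeasure lam))
    (hPmem : ∀ f, P f ∈ discBergSpace lam)
    (hPid : ∀ f ∈ discBergSpace lam, P f = f)
    (hPorth : ∀ f : Lp ℂ 2 (discBergMeasure lam), ∀ g ∈ discBergSpace lam,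
      (inner ℂ (f - P f) g : ℂ) = 0)
    (ψ φ : ℂ → ℂ) (hψmeas : Measurable ψ) (hφmeas : Measurable φ)
    (hψbd : ∃ C : ℝ, ∀ z, ‖ψ z‖ ≤ C) (hφbd : ∃ C : ℝ, ∀ z, ‖φ z‖ ≤ C)
    (hψrad : ∀ θ : ℝ, ∀ᵐ z ∂(volume.restrict unitDisc),
      ψ (Complex.exp (θ * Complex.I) * z) = ψ z)
    (hφrad : ∀ θ : ℝ, ∀ᵐ z ∂(volume.restrict unitDisc),
      φ (Complex.exp (θ * Complex.I) * z) = φ z) :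
    ∀ f : Lp ℂ 2 (discBergMeasure lam), f ∈ discBergSpace lam →
      ∀ a b c d : Lp ℂ 2 (discBergMeasure lam),
        (⇑a =ᵐ[discBergMeasure lam] fun z => φ z * f z) →
        (⇑b =ᵐ[discBergMeasure lam] fun z => ψ z * (P a) z) →
        (⇑c =ᵐ[discBergMeasure lam] fun z => ψ z * f z) →
        (⇑d =ᵐ[discBergMeasure lam] fun z => φ z * (P c) z) →
        P b = P d := by
  intro f hf a b c d ha hb hc hd
  classical
  haveI : IsFiniteMeasure (discBergMeasure lam) := DiscToeplitzAux.bergFinite lam hlam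
  have hdisc : ∀ᵐ z ∂discBergMeasure lam, z ∈ unitDisc := DiscToeplitzAux.ae_mem_disc lam
  -- the monomials as `L²` elements
  have hmem : ∀ m : ℕ, MemLp (fun z : ℂ => z ^ m) 2 (discBergMeasure lam) := by
    intro m
    refine MemLp.of_bound (measurable_id.pow_const m).aestronglyMeasurable 1 ?_
    filter_upwards [hdisc] with z hz
    have h1 : ‖z‖ ≤ 1 := le_of_lt hz
    calc ‖z ^ m‖ = ‖z‖ ^ m := norm_pow _ _
      _ ≤ 1 := pow_le_one₀ (norm_nonneg z) h1
  set e : ℕ → Lp ℂ 2 (discBergMeasure lam) := fun m => ((hmem m).toLp _) with he_def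
  have he : ∀ m : ℕ, ⇑(e m) =ᵐ[discBergMeasure lam] fun z : ℂ => z ^ m :=
    fun m => (hmem m).coeFn_toLp
  have heH : ∀ m : ℕ, e m ∈ discBergSpace lam := fun m =>
    Submodule.le_topologicalClosure _ (Submodule.subset_span ⟨m, he m⟩)
  -- inner products as integrals
  have inner_eq : ∀ (x y : Lp ℂ 2 (discBergMeasure lam)) (X Y : ℂ → ℂ),
      ⇑x =ᵐ[discBergMeasure lam] X → ⇑y =ᵐ[discBergMeasure lam] Y →
      (inner ℂ x y : ℂ) = ∫ z, (starRingEnd ℂ) (X z) * Y z ∂discBergMeasure lam := by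
    intro x y X Y hX hY
    rw [MeasureTheory.L2.inner_def]
    apply integral_congr_ae
    filter_upwards [hX, hY] with z h1 h2
    rw [RCLike.inner_apply, h1, h2, mul_comm]
  -- orthogonality of the projection, right slot
  have horthR : ∀ (x g : Lp ℂ 2 (discBergMeasure lam)), g ∈ discBergSpace lam →
      (inner ℂ g (x - P x) : ℂ) = 0 := by
    intro x g hg
    have h0 := hPorth x g hg
    have h1 := congrArg (starRingEnd ℂ) h0
    rwa [inner_conj_symm, map_zero] at h1
  have hPinner : ∀ (x g : Lp ℂ 2 (discBergMeasure lam)), g ∈ discBergSpace lam →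
      (inner ℂ g (P x) : ℂ) = inner ℂ g x := by
    intro x g hg
    have h0 := horthR x g hg
    rw [inner_sub_right] at h0
    linear_combination -h0
  -- an element of the Bergman space orthogonal to all monomials vanishes
  have hzero : ∀ v : Lp ℂ 2 (discBergMeasure lam), v ∈ discBergSpace lam →
      (∀ k : ℕ, (inner ℂ (e k) v : ℂ) = 0) → v = 0 := by
    intro v hv hall
    have hset : ((Submodule.span ℂ
        {f0 : Lp ℂ 2 (discBergMeasure lam) |
          ∃ k : ℕ, ⇑f0 =ᵐ[discBergMeasure lam] fun z => z ^ k}) : Set _)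
        ⊆ {g : Lp ℂ 2 (discBergMeasure lam) | (inner ℂ g v : ℂ) = 0} := by
      intro g hg
      refine Submodule.span_induction ?_ ?_ ?_ ?_ hg
      · rintro x ⟨k, hk⟩
        have hx : x = e k := MeasureTheory.Lp.ext (hk.trans (he k).symm)
        simp only [Set.mem_setOf_eq, hx]
        exact hall k
      · simp only [Set.mem_setOf_eq, inner_zero_left]
      · intro x y _ _ hx hy
        simp only [Set.mem_setOf_eq] at hx hy ⊢
        rw [inner_add_left, hx, hy, add_zero]
      · intro r x _ hx
        simp only [Set.mem_setOf_eq] at hx ⊢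
        rw [inner_smul_left, hx, mul_zero]
    have hclosed : IsClosed {g : Lp ℂ 2 (discBergMeasure lam) | (inner ℂ g v : ℂ) = 0} :=
      isClosed_eq (Continuous.inner continuous_id continuous_const) continuous_const
    have hv' : v ∈ closure ((Submodule.span ℂ
        {f0 : Lp ℂ 2 (discBergMeasure lam) |
          ∃ k : ℕ, ⇑f0 =ᵐ[discBergMeasure lam] fun z => z ^ k}) : Set _) := by
      rw [← Submodule.topologicalClosure_coe]
      exact hv
    have hvv : (inner ℂ v v : ℂ) = 0 := closure_minimal hset hclosed hv'
    exact inner_self_eq_zero.1 hvv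
  -- the monomials are nonzero
  have hγne : ∀ m : ℕ, (inner ℂ (e m) (e m) : ℂ) ≠ 0 := by
    intro m h0
    have hev : e m = 0 := inner_self_eq_zero.1 h0
    have h1 : (fun z : ℂ => z ^ m) =ᵐ[discBergMeasure lam] 0 := by
      refine (he m).symm.trans ?_
      rw [hev]
      exact MeasureTheory.Lp.coeFn_zero ℂ 2 (discBergMeasure lam)
    have h2 : discBergMeasure lam {z : ℂ | ¬ (z ^ m = (0 : ℂ → ℂ) z)} = 0 := h1
    have h3 : DiscToeplitzAux.annulus ⊆ {z : ℂ | ¬ (z ^ m = (0 : ℂ → ℂ) z)} := by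
      intro z hz
      have hz0 : z ≠ 0 := by
        intro hzz
        have := hz.1
        rw [hzz] at this
        simp at this
        linarith
      simp only [Set.mem_setOf_eq, Pi.zero_apply]
      exact pow_ne_zero m hz0
    have h4 : discBergMeasure lam DiscToeplitzAux.annulus = 0 :=
      measure_mono_null h3 h2
    exact absurd h4 (ne_of_gt (DiscToeplitzAux.ann_pos lam))
  -- orthogonality of distinct monomials
  have hmono_orth : ∀ k m : ℕ, k ≠ m → (inner ℂ (e k) (e m) : ℂ) = 0 := by
    intro k m hkm
    rw [inner_eq (e k) (e m) _ _ (he k) (he m)]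
    have h0 := DiscToeplitzAux.radial_orth lam (fun _ => (1 : ℂ))
      (fun θ => Filter.Eventually.of_forall (fun z => rfl)) (Ne.symm hkm)
    calc ∫ z, (starRingEnd ℂ) (z ^ k) * z ^ m ∂discBergMeasure lam
        = ∫ z, (1 : ℂ) * (z ^ m * (starRingEnd ℂ) z ^ k) ∂discBergMeasure lam := by
          apply integral_congr_ae
          filter_upwards with z
          rw [map_pow]
          ring
      _ = 0 := h0
  -- the key computation: Toeplitz action of a radial symbol against a monomial
  have key : ∀ χ : ℂ → ℂ, Measurable χ → (∃ C : ℝ, ∀ z, ‖χ z‖ ≤ C) →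
      (∀ θ : ℝ, ∀ᵐ z ∂(volume.restrict unitDisc),
        χ (Complex.exp (θ * Complex.I) * z) = χ z) →
      ∀ g : Lp ℂ 2 (discBergMeasure lam), g ∈ discBergSpace lam → ∀ m : ℕ,
      ∫ z, (starRingEnd ℂ) (z ^ m) * (χ z * g z) ∂discBergMeasure lam
        = (∫ z, χ z * (z ^ m * (starRingEnd ℂ) z ^ m) ∂discBergMeasure lam)
            / (inner ℂ (e m) (e m) : ℂ) * (inner ℂ (e m) g : ℂ) := by
    intro χ hχmeas hχbd hχrad g hg m
    obtain ⟨C, hC⟩ := hχbd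
    have hC0 : (0 : ℝ) ≤ C := le_trans (norm_nonneg _) (hC 0)
    have hmemh : MemLp (fun z : ℂ => (starRingEnd ℂ) (χ z) * z ^ m) 2
        (discBergMeasure lam) := by
      refine MemLp.of_bound ?_ C ?_
      · exact ((Complex.continuous_conj.measurable.comp hχmeas).mul
          (measurable_id.pow_const m)).aestronglyMeasurable
      · filter_upwards [hdisc] with z hz
        have h1 : ‖z‖ ≤ 1 := le_of_lt hz
        calc ‖(starRingEnd ℂ) (χ z) * z ^ m‖ = ‖χ z‖ * ‖z‖ ^ m := by
              rw [norm_mul, RCLike.norm_conj, norm_pow]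
          _ ≤ C * 1 := by
              apply mul_le_mul (hC z) (pow_le_one₀ (norm_nonneg z) h1)
                (by positivity) hC0
          _ = C := mul_one C
    set h : Lp ℂ 2 (discBergMeasure lam) := hmemh.toLp _ with hh_def
    have hh : ⇑h =ᵐ[discBergMeasure lam] fun z : ℂ => (starRingEnd ℂ) (χ z) * z ^ m :=
      hmemh.coeFn_toLp
    set S : ℂ := ∫ z, χ z * (z ^ m * (starRingEnd ℂ) z ^ m) ∂discBergMeasure lam with hS_def
    -- LHS is ⟪h, g⟫
    have hA : ∫ z, (starRingEnd ℂ) (z ^ m) * (χ z * g z) ∂discBergMeasure lam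
        = (inner ℂ h g : ℂ) := by
      rw [inner_eq h g _ _ hh (Filter.EventuallyEq.refl _ _)]
      apply integral_congr_ae
      filter_upwards with z
      rw [map_mul, Complex.conj_conj]
      ring
    -- components of h against monomials
    have hBk : ∀ k : ℕ, k ≠ m → (inner ℂ (e k) h : ℂ) = 0 := by
      intro k hkm
      rw [inner_eq (e k) h _ _ (he k) hh]
      have h0 := DiscToeplitzAux.radial_orth lam χ hχrad hkm
      have h1 : ∫ z, (starRingEnd ℂ) (z ^ k) * ((starRingEnd ℂ) (χ z) * z ^ m)
            ∂discBergMeasure lam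
          = (starRingEnd ℂ)
            (∫ z, χ z * (z ^ k * (starRingEnd ℂ) z ^ m) ∂discBergMeasure lam) := by
        rw [← integral_conj]
        apply integral_congr_ae
        filter_upwards with z
        rw [map_mul, map_mul, map_pow, map_pow, Complex.conj_conj]
        ring
      rw [h1, h0, map_zero]
    have hBm : (inner ℂ (e m) h : ℂ) = (starRingEnd ℂ) S := by
      rw [inner_eq (e m) h _ _ (he m) hh, hS_def, ← integral_conj]
      apply integral_congr_ae
      filter_upwards with z
      rw [map_mul, map_mul, map_pow, map_pow, Complex.conj_conj]
      ring
    -- P h is the projection onto the m-th monomial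
    have hPh : P h = ((starRingEnd ℂ) S / (inner ℂ (e m) (e m) : ℂ)) • e m := by
      have hsub : P h - ((starRingEnd ℂ) S / (inner ℂ (e m) (e m) : ℂ)) • e m = 0 := by
        apply hzero _ (Submodule.sub_mem _ (hPmem h)
          (Submodule.smul_mem _ _ (heH m)))
        intro k
        rw [inner_sub_right, inner_smul_right, hPinner h (e k) (heH k)]
        by_cases hkm : k = m
        · subst hkm
          rw [hBm, div_mul_cancel₀ _ (hγne k), sub_self]
        · rw [hBk k hkm, hmono_orth k m hkm, mul_zero, sub_zero]
      have := sub_eq_zero.mp hsub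
      exact this
    -- put everything together
    have hhg : (inner ℂ h g : ℂ) = inner ℂ (P h) g := by
      have h2 := hPorth h g hg
      rw [inner_sub_left] at h2
      linear_combination h2
    rw [hA, hhg, hPh, inner_smul_left, map_div₀, Complex.conj_conj, inner_conj_symm]
  -- now compare the two compositions against each monomial
  have hcomp : ∀ m : ℕ, (inner ℂ (e m) (P b) : ℂ) = (inner ℂ (e m) (P d) : ℂ) := by
    intro m
    have h1 : (inner ℂ (e m) (P b) : ℂ) = inner ℂ (e m) b := hPinner b (e m) (heH m)
    have h2 : (inner ℂ (e m) b : ℂ)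
        = ∫ z, (starRingEnd ℂ) (z ^ m) * (ψ z * (P a) z) ∂discBergMeasure lam :=
      inner_eq (e m) b _ _ (he m) hb
    have h3 := key ψ hψmeas hψbd hψrad (P a) (hPmem a) m
    have h4 : (inner ℂ (e m) (P a) : ℂ) = inner ℂ (e m) a := hPinner a (e m) (heH m)
    have h5 : (inner ℂ (e m) a : ℂ)
        = ∫ z, (starRingEnd ℂ) (z ^ m) * (φ z * f z) ∂discBergMeasure lam :=
      inner_eq (e m) a _ _ (he m) ha
    have h6 := key φ hφmeas hφbd hφrad f hf m
    have h1' : (inner ℂ (e m) (P d) : ℂ) = inner ℂ (e m) d := hPinner d (e m) (heH m)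
    have h2' : (inner ℂ (e m) d : ℂ)
        = ∫ z, (starRingEnd ℂ) (z ^ m) * (φ z * (P c) z) ∂discBergMeasure lam :=
      inner_eq (e m) d _ _ (he m) hd
    have h3' := key φ hφmeas hφbd hφrad (P c) (hPmem c) m
    have h4' : (inner ℂ (e m) (P c) : ℂ) = inner ℂ (e m) c := hPinner c (e m) (heH m)
    have h5' : (inner ℂ (e m) c : ℂ)
        = ∫ z, (starRingEnd ℂ) (z ^ m) * (ψ z * f z) ∂discBergMeasure lam :=
      inner_eq (e m) c _ _ (he m) hc
    have h6' := key ψ hψmeas hψbd hψrad f hf m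
    rw [h1, h2, h3, h4, h5, h6, h1', h2', h3', h4', h5', h6']
    ring
  have hfin : P b - P d = 0 := by
    apply hzero _ (Submodule.sub_mem _ (hPmem b) (hPmem d))
    intro k
    rw [inner_sub_right, hcomp k, sub_self]
  exact sub_eq_zero.mp hfin
end
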